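/- arXiv:2305.13041 — 6 statements merged into one kernel-verified Lean document; each statement's English description precedes it below -/
import Mathlib

section
/- Let G > 0 and μ ∈ ℝ, let g ∈ ℝ^F with ‖g‖² ≤ G and s a vector with ‖s‖² ≤ 1, and suppose a vector v satisfies ‖v‖² = (1−μ)²·‖g‖²·‖s‖²·‖Σ_{j∈S} Σ_{l∈S, l≠j} p_j·p_l·(b_j ⊗ (c_j − c_l))‖²_F / (Σ_{m∈S} p_m)⁴. If D > 0 and 1 − 1/√(d(d−1)·D) ≤ μ ≤ 1, then ‖v‖² ≤ G. -/
private theorem euc_sum_apply {ι κ : Type*} [Fintype κ] (s : Finset ι)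
    (f : ι → EuclideanSpace ℝ κ) (i : κ) :
    (∑ x ∈ s, f x) i = ∑ x ∈ s, f x i := by
  induction s using Finset.cons_induction with
  | empty => simp
  | cons a t ha ih => rw [Finset.sum_cons, Finset.sum_cons, ← ih]; rfl

set_option maxHeartbeats 1600000

/-- **Theorem 3 (range of the fusion parameter).** If the squared norm of the
attention-parameter gradient `v` has the product form coming from the graph-attention
aggregation, `‖g‖² ≤ G`, `‖s‖² ≤ 1`, and the fusion parameter satisfies
`1 − 1/√(d(d−1)D) ≤ μ ≤ 1` with `D > 0` the non-i.i.d. measure, then `‖v‖² ≤ G`. -/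
theorem fusion_parameter_range
    {F : ℕ} {ι : Type*} [DecidableEq ι] (S : Finset ι) (d : ℕ)
    (hd : S.card = d) (hd2 : 2 ≤ d)
    {V W : Type*} [NormedAddCommGroup V] [InnerProductSpace ℝ V]
    [NormedAddCommGroup W] [InnerProductSpace ℝ W]
    (G : ℝ) (hG : 0 < G) (μ : ℝ)
    (g : EuclideanSpace ℝ (Fin F)) (hg : ‖g‖ ^ 2 ≤ G)
    (s : V) (hs : ‖s‖ ^ 2 ≤ 1)
    (p : ι → ℝ) (hp : ∀ j ∈ S, 0 < p j)
    (b : ι → EuclideanSpace ℝ (Fin F))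
    (c : ι → EuclideanSpace ℝ (Fin (2 * F)))
    (v : W)
    (hv : ‖v‖ ^ 2 = (1 - μ) ^ 2 * ‖g‖ ^ 2 * ‖s‖ ^ 2 *
      (∑ i : Fin F, ∑ k : Fin (2 * F),
        ((∑ j ∈ S, ∑ l ∈ S.erase j,
            (p j * p l) • (Matrix.of fun (i : Fin F) (k : Fin (2 * F)) => b j i * (c j - c l) k))
          i k) ^ 2) / (∑ m ∈ S, p m) ^ 4)
    (D : ℝ)
    (hD : D = (∑ j ∈ S, ‖b j‖ ^ 2) * (∑ j ∈ S, ∑ l ∈ S.erase j, ‖c j - c l‖ ^ 2))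
    (hDpos : 0 < D)
    (hμ1 : 1 - 1 / Real.sqrt ((d : ℝ) * ((d : ℝ) - 1) * D) ≤ μ) (hμ2 : μ ≤ 1) :
    ‖v‖ ^ 2 ≤ G := by
  have hSne : S.Nonempty := Finset.card_pos.mp (by omega)
  have hP : 0 < ∑ m ∈ S, p m := Finset.sum_pos hp hSne
  set P : ℝ := ∑ m ∈ S, p m with hPdef
  have hd1 : (2 : ℝ) ≤ (d : ℝ) := by exact_mod_cast hd2
  have hK : 0 < (d : ℝ) * ((d : ℝ) - 1) * D := by
    have : (1 : ℝ) ≤ (d : ℝ) - 1 := by linarith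
    positivity
  have hμ0 : 0 ≤ 1 - μ := by linarith
  have hsqrt : 0 < Real.sqrt ((d : ℝ) * ((d : ℝ) - 1) * D) := Real.sqrt_pos.mpr hK
  have hμsq : (1 - μ) ^ 2 ≤ 1 / ((d : ℝ) * ((d : ℝ) - 1) * D) := by
    have h1 : 1 - μ ≤ 1 / Real.sqrt ((d : ℝ) * ((d : ℝ) - 1) * D) := by linarith
    calc (1 - μ) ^ 2 ≤ (1 / Real.sqrt ((d : ℝ) * ((d : ℝ) - 1) * D)) ^ 2 :=
          pow_le_pow_left₀ hμ0 h1 2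
      _ = 1 / ((d : ℝ) * ((d : ℝ) - 1) * D) := by
          rw [div_pow, one_pow, Real.sq_sqrt hK.le]
  set e : ι → ι → EuclideanSpace ℝ (Fin F × Fin (2 * F)) :=
    fun j l => WithLp.toLp 2 fun ik : Fin F × Fin (2 * F) => p j * p l * (b j ik.1 * (c j - c l) ik.2) with he
  set w : EuclideanSpace ℝ (Fin F × Fin (2 * F)) := ∑ j ∈ S, ∑ l ∈ S.erase j, e j l with hw
  have hwapply : ∀ ik : Fin F × Fin (2 * F),
      w ik = ∑ j ∈ S, ∑ l ∈ S.erase j, p j * p l * (b j ik.1 * (c j - c l) ik.2) := by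
    intro ik
    rw [hw, euc_sum_apply]
    exact Finset.sum_congr rfl fun j _ => euc_sum_apply _ _ _
  set T : ℝ := ∑ i : Fin F, ∑ k : Fin (2 * F),
      ((∑ j ∈ S, ∑ l ∈ S.erase j,
          (p j * p l) • (Matrix.of fun (i : Fin F) (k : Fin (2 * F)) => b j i * (c j - c l) k))
        i k) ^ 2 with hT
  have hTw : T = ‖w‖ ^ 2 := by
    rw [EuclideanSpace.norm_eq, Real.sq_sqrt (by positivity)]
    rw [Fintype.sum_prod_type]
    refine Finset.sum_congr rfl fun i _ => Finset.sum_congr rfl fun k _ => ?_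
    rw [hwapply (i, k)]
    simp [Matrix.sum_apply, Real.norm_eq_abs, sq_abs, mul_comm]
  have hb' : ∀ j, ‖b j‖ ^ 2 = ∑ i : Fin F, (b j i) ^ 2 := by
    intro j
    rw [EuclideanSpace.norm_eq, Real.sq_sqrt (by positivity)]
    simp [Real.norm_eq_abs, sq_abs]
  have hc' : ∀ j l, ‖c j - c l‖ ^ 2 = ∑ k : Fin (2 * F), ((c j - c l) k) ^ 2 := by
    intro j l
    rw [EuclideanSpace.norm_eq, Real.sq_sqrt (by positivity)]
    simp [Real.norm_eq_abs, sq_abs]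
  have hnorm_e : ∀ j ∈ S, ∀ l ∈ S.erase j,
      ‖e j l‖ = p j * p l * (‖b j‖ * ‖c j - c l‖) := by
    intro j hj l hl
    have hsq : ‖e j l‖ ^ 2 = (p j * p l * (‖b j‖ * ‖c j - c l‖)) ^ 2 := by
      rw [EuclideanSpace.norm_eq, Real.sq_sqrt (by positivity), Fintype.sum_prod_type]
      rw [show (p j * p l * (‖b j‖ * ‖c j - c l‖)) ^ 2
            = (p j * p l) ^ 2 * (‖b j‖ ^ 2 * ‖c j - c l‖ ^ 2) by ring,
          hb' j, hc' j l, Finset.sum_mul_sum, Finset.mul_sum]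
      refine Finset.sum_congr rfl fun i _ => ?_
      rw [Finset.mul_sum]
      refine Finset.sum_congr rfl fun k _ => ?_
      simp only [he, PiLp.toLp_apply, Real.norm_eq_abs, sq_abs]
      ring
    have hl' : l ∈ S := Finset.mem_of_mem_erase hl
    have h2 : 0 ≤ p j * p l * (‖b j‖ * ‖c j - c l‖) := by
      have := (hp j hj).le; have := (hp l hl').le; positivity
    calc ‖e j l‖ = Real.sqrt (‖e j l‖ ^ 2) := (Real.sqrt_sq (norm_nonneg _)).symm
      _ = Real.sqrt ((p j * p l * (‖b j‖ * ‖c j - c l‖)) ^ 2) := by rw [hsq]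
      _ = p j * p l * (‖b j‖ * ‖c j - c l‖) := Real.sqrt_sq h2
  have htri : ‖w‖ ≤ ∑ j ∈ S, ∑ l ∈ S.erase j, p j * p l * (‖b j‖ * ‖c j - c l‖) := by
    rw [hw]
    calc ‖∑ j ∈ S, ∑ l ∈ S.erase j, e j l‖ ≤ ∑ j ∈ S, ‖∑ l ∈ S.erase j, e j l‖ :=
          norm_sum_le _ _
      _ ≤ ∑ j ∈ S, ∑ l ∈ S.erase j, ‖e j l‖ :=
          Finset.sum_le_sum fun j _ => norm_sum_le _ _
      _ = _ := Finset.sum_congr rfl fun j hj =>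
          Finset.sum_congr rfl fun l hl => hnorm_e j hj l hl
  have hCS : (∑ j ∈ S, ∑ l ∈ S.erase j, p j * p l * (‖b j‖ * ‖c j - c l‖)) ^ 2 ≤
      (∑ j ∈ S, ∑ l ∈ S.erase j, (p j * p l) ^ 2) *
      (∑ j ∈ S, ∑ l ∈ S.erase j, (‖b j‖ * ‖c j - c l‖) ^ 2) := by
    rw [Finset.sum_sigma' S (fun j => S.erase j) (fun j l => p j * p l * (‖b j‖ * ‖c j - c l‖)),
        Finset.sum_sigma' S (fun j => S.erase j) (fun j l => (p j * p l) ^ 2),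
        Finset.sum_sigma' S (fun j => S.erase j) (fun j l => (‖b j‖ * ‖c j - c l‖) ^ 2)]
    exact Finset.sum_mul_sq_le_sq_mul_sq _ _ _
  have hsq_le : ∑ i ∈ S, p i ^ 2 ≤ P ^ 2 := by
    calc ∑ i ∈ S, p i ^ 2 = ∑ i ∈ S, p i * p i := by simp [sq]
      _ ≤ ∑ i ∈ S, p i * P := by
          refine Finset.sum_le_sum fun i hi => ?_
          exact mul_le_mul_of_nonneg_left
            (Finset.single_le_sum (fun m hm => (hp m hm).le) hi) (hp i hi).le
      _ = P * P := by rw [← Finset.sum_mul]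
      _ = P ^ 2 := (sq P).symm
  have hp4 : (∑ j ∈ S, ∑ l ∈ S.erase j, (p j * p l) ^ 2) ≤ P ^ 4 := by
    calc ∑ j ∈ S, ∑ l ∈ S.erase j, (p j * p l) ^ 2
        = ∑ j ∈ S, p j ^ 2 * ∑ l ∈ S.erase j, p l ^ 2 := by
          refine Finset.sum_congr rfl fun j _ => ?_
          rw [Finset.mul_sum]; exact Finset.sum_congr rfl fun l _ => (mul_pow _ _ _)
      _ ≤ ∑ j ∈ S, p j ^ 2 * P ^ 2 := by
          refine Finset.sum_le_sum fun j hj => ?_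
          have h1 : ∑ l ∈ S.erase j, p l ^ 2 ≤ ∑ l ∈ S, p l ^ 2 :=
            Finset.sum_le_sum_of_subset_of_nonneg (Finset.erase_subset _ _)
              (fun l _ _ => sq_nonneg _)
          exact mul_le_mul_of_nonneg_left (h1.trans hsq_le) (sq_nonneg _)
      _ = (∑ j ∈ S, p j ^ 2) * P ^ 2 := by rw [← Finset.sum_mul]
      _ ≤ P ^ 2 * P ^ 2 := mul_le_mul_of_nonneg_right hsq_le (sq_nonneg _)
      _ = P ^ 4 := by ring
  have hbc : (∑ j ∈ S, ∑ l ∈ S.erase j, (‖b j‖ * ‖c j - c l‖) ^ 2) ≤ D := by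
    rw [hD]
    calc ∑ j ∈ S, ∑ l ∈ S.erase j, (‖b j‖ * ‖c j - c l‖) ^ 2
        = ∑ j ∈ S, ‖b j‖ ^ 2 * ∑ l ∈ S.erase j, ‖c j - c l‖ ^ 2 := by
          refine Finset.sum_congr rfl fun j _ => ?_
          rw [Finset.mul_sum]; exact Finset.sum_congr rfl fun l _ => (mul_pow _ _ _)
      _ ≤ ∑ j ∈ S, ‖b j‖ ^ 2 * ∑ j' ∈ S, ∑ l ∈ S.erase j', ‖c j' - c l‖ ^ 2 := by
          refine Finset.sum_le_sum fun j hj => ?_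
          refine mul_le_mul_of_nonneg_left ?_ (sq_nonneg _)
          exact Finset.single_le_sum (f := fun j' => ∑ l ∈ S.erase j', ‖c j' - c l‖ ^ 2)
            (fun j' _ => Finset.sum_nonneg fun l _ => sq_nonneg _) hj
      _ = (∑ j ∈ S, ‖b j‖ ^ 2) * (∑ j ∈ S, ∑ l ∈ S.erase j, ‖c j - c l‖ ^ 2) := by
          rw [← Finset.sum_mul]
  have hTbound : T ≤ P ^ 4 * D := by
    rw [hTw]
    calc ‖w‖ ^ 2 ≤ (∑ j ∈ S, ∑ l ∈ S.erase j, p j * p l * (‖b j‖ * ‖c j - c l‖)) ^ 2 :=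
          pow_le_pow_left₀ (norm_nonneg _) htri 2
      _ ≤ (∑ j ∈ S, ∑ l ∈ S.erase j, (p j * p l) ^ 2) *
          (∑ j ∈ S, ∑ l ∈ S.erase j, (‖b j‖ * ‖c j - c l‖) ^ 2) := hCS
      _ ≤ P ^ 4 * D := by
          apply mul_le_mul hp4 hbc
          · exact Finset.sum_nonneg fun j _ => Finset.sum_nonneg fun l _ => sq_nonneg _
          · positivity
  have hT0 : 0 ≤ T := by rw [hTw]; positivity
  have hPne : P ≠ 0 := hP.ne'
  have hDne : D ≠ 0 := hDpos.ne'
  have hdd : (d : ℝ) * ((d : ℝ) - 1) ≠ 0 := by nlinarith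
  clear_value T P e w
  rw [hv]
  set K : ℝ := (d : ℝ) * ((d : ℝ) - 1) * D with hKdef
  have h1 : (1 - μ) ^ 2 * ‖g‖ ^ 2 ≤ (1 / K) * G :=
    mul_le_mul hμsq hg (sq_nonneg _) (by positivity)
  have h2 : (1 - μ) ^ 2 * ‖g‖ ^ 2 * ‖s‖ ^ 2 ≤ (1 / K) * G * 1 :=
    mul_le_mul h1 hs (sq_nonneg _) (by positivity)
  have h3 : (1 - μ) ^ 2 * ‖g‖ ^ 2 * ‖s‖ ^ 2 * T ≤ (1 / K) * G * 1 * (P ^ 4 * D) :=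
    mul_le_mul h2 hTbound hT0 (by positivity)
  calc (1 - μ) ^ 2 * ‖g‖ ^ 2 * ‖s‖ ^ 2 * T / P ^ 4
      ≤ (1 / K) * G * 1 * (P ^ 4 * D) / P ^ 4 :=
        div_le_div_of_nonneg_right h3 (by positivity)
    _ = G / ((d : ℝ) * ((d : ℝ) - 1)) := by
        rw [hKdef]
        field_simp
    _ ≤ G := by
        apply div_le_self hG.le
        nlinarith
end

section
/- If η < 1/(4TL), then for every 0 ≤ t ≤ T one has E[‖w_t − w_0‖²] ≤ 4Tη²χ² + 16T²η²·E[‖∇f(w_0)‖²]. -/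
set_option maxHeartbeats 1000000

open MeasureTheory
open scoped RealInnerProductSpace

section Helpers

variable {E : Type*} [NormedAddCommGroup E] [InnerProductSpace ℝ E]
  {Ω : Type*} {m mΩ : MeasurableSpace Ω} {μ : Measure Ω}

lemma my_integrable_inner {X Y : Ω → E} (hX : MemLp X 2 μ) (hY : MemLp Y 2 μ) :
    Integrable (fun ω => ⟪X ω, Y ω⟫) μ := by
  have h := L2.integrable_inner (𝕜 := ℝ) (hX.toLp X) (hY.toLp Y)
  apply h.congr
  filter_upwards [hX.coeFn_toLp, hY.coeFn_toLp] with ω h1 h2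
  rw [h1, h2]

lemma my_integrable_sq_norm {X : Ω → E} (hX : MemLp X 2 μ) :
    Integrable (fun ω => ‖X ω‖ ^ 2) μ := by
  have := my_integrable_inner hX hX
  apply this.congr
  filter_upwards with ω using (real_inner_self_eq_norm_sq _)

lemma my_condexp_const_inner [CompleteSpace E] (hm : m ≤ mΩ) [IsFiniteMeasure μ]
    {Y : Ω → E} (hY : Integrable Y μ) (v : E) :
    μ[fun ω => ⟪v, Y ω⟫|m] =ᵐ[μ] fun ω => ⟪v, (μ[Y|m]) ω⟫ := by
  refine (ae_eq_condExp_of_forall_setIntegral_eq hm (hY.const_inner v)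
    (fun s _ _ => (integrable_condExp.const_inner v).integrableOn)
    (fun s hs hμs => ?_)
    (StronglyMeasurable.aestronglyMeasurable
      (stronglyMeasurable_const.inner stronglyMeasurable_condExp))).symm
  rw [integral_inner integrable_condExp.integrableOn v,
    setIntegral_condExp hm hY hs, ← integral_inner hY.integrableOn v]

lemma my_integral_inner_condexp [FiniteDimensional ℝ E] (hm : m ≤ mΩ) [IsFiniteMeasure μ]
    {X Y h : Ω → E} (hXm : StronglyMeasurable[m] X) (hX : MemLp X 2 μ) (hY : MemLp Y 2 μ)
    (hh : MemLp h 2 μ) (hcond : μ[Y|m] =ᵐ[μ] h) :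
    ∫ ω, ⟪X ω, Y ω⟫ ∂μ = ∫ ω, ⟪X ω, h ω⟫ ∂μ := by
  classical
  let b := stdOrthonormalBasis ℝ E
  have hsplit : ∀ (Z : Ω → E), MemLp Z 2 μ →
      ∫ ω, ⟪X ω, Z ω⟫ ∂μ = ∑ i, ∫ ω, ⟪X ω, b i⟫ * ⟪b i, Z ω⟫ ∂μ := by
    intro Z hZ
    rw [← integral_finset_sum]
    · exact integral_congr_ae (Filter.Eventually.of_forall fun ω =>
        (b.sum_inner_mul_inner (X ω) (Z ω)).symm)
    · intro i _
      have h1 : MemLp (fun ω => ⟪X ω, b i⟫) 2 μ := hX.inner_const (b i)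
      have h2 : MemLp (fun ω => ⟪b i, Z ω⟫) 2 μ := hZ.const_inner (b i)
      have := my_integrable_inner (E := ℝ) h1 h2
      apply this.congr
      filter_upwards with ω
      simp [RCLike.inner_apply, mul_comm]
  rw [hsplit Y hY, hsplit h hh]
  refine Finset.sum_congr rfl fun i _ => ?_
  have hφm : StronglyMeasurable[m] (fun ω => ⟪X ω, b i⟫) :=
    hXm.inner stronglyMeasurable_const
  have hψint : Integrable (fun ω => ⟪b i, Y ω⟫) μ := (hY.integrable one_le_two).const_inner _
  have hprod : Integrable ((fun ω => ⟪X ω, b i⟫) * fun ω => ⟪b i, Y ω⟫) μ := by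
    have := my_integrable_inner (E := ℝ) (hX.inner_const (b i)) (hY.const_inner (b i))
    apply this.congr; filter_upwards with ω; simp [RCLike.inner_apply, mul_comm]
  have hpull := condExp_mul_of_stronglyMeasurable_left hφm hprod hψint
  have hcond' : μ[fun ω => ⟪b i, Y ω⟫|m] =ᵐ[μ] fun ω => ⟪b i, h ω⟫ := by
    refine (my_condexp_const_inner hm (hY.integrable one_le_two) (b i)).trans ?_
    filter_upwards [hcond] with ω hω
    rw [hω]
  calc ∫ ω, ⟪X ω, b i⟫ * ⟪b i, Y ω⟫ ∂μ
      = ∫ ω, (μ[(fun ω => ⟪X ω, b i⟫) * fun ω => ⟪b i, Y ω⟫|m]) ω ∂μ :=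
        (integral_condExp hm).symm
    _ = ∫ ω, ⟪X ω, b i⟫ * ⟪b i, h ω⟫ ∂μ := by
        refine integral_congr_ae ?_
        filter_upwards [hpull, hcond'] with ω h1 h2
        rw [h1, Pi.mul_apply, h2]

end Helpers

lemma scalar_step (T η L x a n h Gn I : ℝ) (hT : 1 ≤ T) (hη : 0 < η) (hL : 0 < L)
    (hηL : 4 * T * η * L ≤ 1) (hx : 0 ≤ x) (ha : 0 ≤ a) (hn : 0 ≤ n) (hh : 0 ≤ h)
    (hGn : 0 ≤ Gn) (hI : -I ≤ x * h) (hh2 : h ≤ a + L * x) (hG2 : Gn ≤ n + h) :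
    x ^ 2 - 2 * η * I + η ^ 2 * Gn ^ 2
      ≤ (1 + 1 / T) * x ^ 2 + 2 * η ^ 2 * n ^ 2 + (4 * T + 4) * η ^ 2 * a ^ 2 := by
  have hT0 : (0:ℝ) < T := lt_of_lt_of_le one_pos hT
  have c1 : Gn ^ 2 ≤ 2 * n ^ 2 + 2 * h ^ 2 := by nlinarith [sq_nonneg (n - h)]
  have c2 : h ^ 2 ≤ 2 * a ^ 2 + 2 * (L * x) ^ 2 := by
    nlinarith [sq_nonneg (a - L * x), mul_nonneg hL.le hx]
  have hxh : -I ≤ x * a + L * x ^ 2 := by nlinarith [mul_le_mul_of_nonneg_left hh2 hx]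
  have c3 : -(2 * T * η * I) ≤ 2 * T * η * (x * a) + 2 * T * η * L * x ^ 2 := by
    have h2η : (0:ℝ) ≤ 2 * T * η := by positivity
    nlinarith [mul_le_mul_of_nonneg_left hxh h2η]
  have d1 : 2 * T * η * (x * a) ≤ x ^ 2 / 4 + 4 * T ^ 2 * η ^ 2 * a ^ 2 := by
    nlinarith [sq_nonneg (x - 4 * T * η * a)]
  have d2 : 2 * T * η * L * x ^ 2 ≤ x ^ 2 / 2 := by
    nlinarith [mul_le_mul_of_nonneg_right hηL (sq_nonneg x)]
  have hη2 : (0:ℝ) ≤ T * η ^ 2 := by positivity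
  have d3 : T * η ^ 2 * Gn ^ 2 ≤ 2 * T * η ^ 2 * n ^ 2 + 2 * T * η ^ 2 * h ^ 2 := by
    have e := mul_le_mul_of_nonneg_left c1 hη2
    ring_nf at e ⊢
    linarith
  have d4 : 2 * T * η ^ 2 * h ^ 2 ≤ 4 * T * η ^ 2 * a ^ 2 + 4 * T * η ^ 2 * L ^ 2 * x ^ 2 := by
    have e := mul_le_mul_of_nonneg_left c2 (by positivity : (0:ℝ) ≤ 2 * T * η ^ 2)
    ring_nf at e ⊢
    linarith
  have h16 : 16 * T * η ^ 2 * L ^ 2 ≤ 1 := by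
    nlinarith [mul_le_mul_of_nonneg_left hηL (by positivity : (0:ℝ) ≤ 4 * T * η * L),
      mul_pos (mul_pos (mul_pos (by linarith : (0:ℝ) < 4 * T) hη) hL) hT0]
  have d5 : 4 * T * η ^ 2 * L ^ 2 * x ^ 2 ≤ x ^ 2 / 4 := by
    have e := mul_le_mul_of_nonneg_right h16 (sq_nonneg x)
    ring_nf at e ⊢
    linarith
  have key : T * (x ^ 2 - 2 * η * I + η ^ 2 * Gn ^ 2)
      ≤ T * ((1 + 1 / T) * x ^ 2 + 2 * η ^ 2 * n ^ 2 + (4 * T + 4) * η ^ 2 * a ^ 2) := by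
    have expand : T * ((1 + 1 / T) * x ^ 2 + 2 * η ^ 2 * n ^ 2 + (4 * T + 4) * η ^ 2 * a ^ 2)
        = (T + 1) * x ^ 2 + 2 * T * η ^ 2 * n ^ 2 + (4 * T + 4) * T * η ^ 2 * a ^ 2 := by
      field_simp
    rw [expand]
    ring_nf at c3 d1 d2 d3 d4 d5 ⊢
    linarith
  exact le_of_mul_le_mul_left key hT0

/-- **Lemma 2 (GATTA).** For a stochastic-gradient trajectory with step size `η < 1/(4TL)`,
the expected squared drift of the iterates from the starting point is bounded by
`4Tη²χ² + 16T²η²·E[‖∇f(w₀)‖²]`. -/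
theorem gatta_lemma2
    {E : Type*} [NormedAddCommGroup E] [InnerProductSpace ℝ E] [FiniteDimensional ℝ E]
    {Ω : Type*} {mΩ : MeasurableSpace Ω} {μ : Measure Ω} [IsProbabilityMeasure μ]
    (ℱ : Filtration ℕ mΩ)
    (f : E → ℝ) (L : ℝ) (hL : 0 < L)
    (hdiff : Differentiable ℝ f)
    (hsmooth : ∀ x y : E, ‖gradient f x - gradient f y‖ ≤ L * ‖x - y‖)
    (T : ℕ) (hT : 1 ≤ T) (η : ℝ) (hη : 0 < η) (χ : ℝ) (hχ : 0 ≤ χ)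
    (w g : ℕ → Ω → E)
    (hupd : ∀ t, w (t + 1) = fun ω => w t ω - η • g t ω)
    (hw_meas : ∀ t, StronglyMeasurable[ℱ t] (w t))
    (hg_meas : ∀ t, StronglyMeasurable[ℱ (t + 1)] (g t))
    (hw_L2 : ∀ t, MemLp (w t) 2 μ)
    (hg_L2 : ∀ t, MemLp (g t) 2 μ)
    (h_unbiased : ∀ t, μ[g t | ℱ t] =ᵐ[μ] fun ω => gradient f (w t ω))
    (h_var : ∀ t, ∫ ω, ‖g t ω - gradient f (w t ω)‖ ^ 2 ∂μ ≤ χ ^ 2)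
    (hη_small : η < 1 / (4 * T * L)) :
    ∀ t ≤ T, ∫ ω, ‖w t ω - w 0 ω‖ ^ 2 ∂μ
      ≤ 4 * T * η ^ 2 * χ ^ 2 + 16 * T ^ 2 * η ^ 2 * ∫ ω, ‖gradient f (w 0 ω)‖ ^ 2 ∂μ := by
  have hT0 : (0:ℝ) < T := by exact_mod_cast Nat.pos_of_ne_zero (by omega)
  have hT1 : (1:ℝ) ≤ T := by exact_mod_cast hT
  have hηL : 4 * (T:ℝ) * η * L ≤ 1 := by
    have h4TL : (0:ℝ) < 4 * T * L := by positivity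
    rw [lt_div_iff₀ h4TL] at hη_small
    nlinarith
  have hgc : Continuous (gradient f) := by
    have hlip : LipschitzWith (Real.toNNReal L) (gradient f) := by
      apply LipschitzWith.of_dist_le_mul
      intro x y
      rw [dist_eq_norm, dist_eq_norm, Real.coe_toNNReal _ hL.le]
      exact hsmooth x y
    exact hlip.continuous
  have hgrad_L2 : ∀ t, MemLp (fun ω => gradient f (w t ω)) 2 μ := by
    intro t
    have hb : MemLp (fun ω => ‖gradient f 0‖ + L * ‖w t ω‖) 2 μ :=
      by have h1 := (memLp_const (μ := μ) (p := 2) ‖gradient f 0‖).add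
           (((hw_L2 t).norm).const_mul L); exact h1
    refine hb.of_le (hgc.comp_aestronglyMeasurable (hw_L2 t).1) ?_
    filter_upwards with ω
    have h2 := hsmooth (w t ω) 0
    simp only [sub_zero] at h2
    have h1 := norm_sub_norm_le (gradient f (w t ω)) (gradient f 0)
    calc ‖gradient f (w t ω)‖ ≤ ‖gradient f 0‖ + L * ‖w t ω‖ := by linarith
      _ ≤ ‖‖gradient f 0‖ + L * ‖w t ω‖‖ := le_abs_self _
  set G := ∫ ω, ‖gradient f (w 0 ω)‖ ^ 2 ∂μ with hGdef
  have hG0 : 0 ≤ G := integral_nonneg fun ω => sq_nonneg _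
  set D : ℕ → ℝ := fun t => ∫ ω, ‖w t ω - w 0 ω‖ ^ 2 ∂μ with hDdef
  set C : ℝ := 2 * η ^ 2 * χ ^ 2 + (4 * T + 4) * η ^ 2 * G with hCdef
  have hC0 : 0 ≤ C := by
    have : (0:ℝ) ≤ 2 * η ^ 2 * χ ^ 2 := by positivity
    have : (0:ℝ) ≤ (4 * (T:ℝ) + 4) * η ^ 2 * G := by positivity
    rw [hCdef]; positivity
  have hstep : ∀ t, D (t + 1) ≤ (1 + 1 / T) * D t + C := by
    intro t
    have hX2 : MemLp (fun ω => w t ω - w 0 ω) 2 μ := (hw_L2 t).sub (hw_L2 0)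
    have hXm : StronglyMeasurable[ℱ t] (fun ω => w t ω - w 0 ω) :=
      (hw_meas t).sub ((hw_meas 0).mono (ℱ.mono (Nat.zero_le t)))
    have hh2 : MemLp (fun ω => gradient f (w t ω)) 2 μ := hgrad_L2 t
    have h02 : MemLp (fun ω => gradient f (w 0 ω)) 2 μ := hgrad_L2 0
    have hN2 : MemLp (fun ω => g t ω - gradient f (w t ω)) 2 μ := (hg_L2 t).sub hh2
    have iXX := my_integrable_sq_norm hX2
    have igg := my_integrable_sq_norm (hg_L2 t)
    have iNN := my_integrable_sq_norm hN2
    have i00 := my_integrable_sq_norm h02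
    have iXg := my_integrable_inner hX2 (hg_L2 t)
    have iXh := my_integrable_inner hX2 hh2
    have hA : D (t + 1) = ∫ ω, (‖w t ω - w 0 ω‖ ^ 2 - 2 * η * ⟪w t ω - w 0 ω, g t ω⟫
        + η ^ 2 * ‖g t ω‖ ^ 2) ∂μ := by
      simp only [hDdef, hupd t]
      refine integral_congr_ae (Filter.Eventually.of_forall fun ω => ?_)
      show ‖w t ω - η • g t ω - w 0 ω‖ ^ 2 = _
      have e1 : w t ω - η • g t ω - w 0 ω = (w t ω - w 0 ω) - η • g t ω := by abel
      rw [e1, norm_sub_sq_real, real_inner_smul_right, norm_smul, Real.norm_eq_abs,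
        abs_of_pos hη]
      ring
    have hC1 : ∫ ω, ⟪w t ω - w 0 ω, g t ω⟫ ∂μ
        = ∫ ω, ⟪w t ω - w 0 ω, gradient f (w t ω)⟫ ∂μ :=
      my_integral_inner_condexp (ℱ.le t) hXm hX2 (hg_L2 t) hh2 (h_unbiased t)
    have iA1 : Integrable (fun ω => ‖w t ω - w 0 ω‖ ^ 2
        - 2 * η * ⟪w t ω - w 0 ω, g t ω⟫) μ := iXX.sub (iXg.const_mul _)
    have iA2 : Integrable (fun ω => η ^ 2 * ‖g t ω‖ ^ 2) μ := igg.const_mul _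
    have iB1 : Integrable (fun ω => ‖w t ω - w 0 ω‖ ^ 2
        - 2 * η * ⟪w t ω - w 0 ω, gradient f (w t ω)⟫) μ := iXX.sub (iXh.const_mul _)
    have hB : D (t + 1) = ∫ ω, (‖w t ω - w 0 ω‖ ^ 2
        - 2 * η * ⟪w t ω - w 0 ω, gradient f (w t ω)⟫ + η ^ 2 * ‖g t ω‖ ^ 2) ∂μ := by
      rw [hA, integral_add iA1 iA2, integral_add iB1 iA2,
        integral_sub iXX (iXg.const_mul _), integral_sub iXX (iXh.const_mul _),
        integral_const_mul, integral_const_mul, integral_const_mul, hC1]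
    have hmono : D (t + 1) ≤ ∫ ω, ((1 + 1/(T:ℝ)) * ‖w t ω - w 0 ω‖ ^ 2
        + 2 * η ^ 2 * ‖g t ω - gradient f (w t ω)‖ ^ 2
        + (4 * T + 4) * η ^ 2 * ‖gradient f (w 0 ω)‖ ^ 2) ∂μ := by
      rw [hB]
      refine integral_mono ((iXX.sub (iXh.const_mul _)).add (igg.const_mul _))
        (((iXX.const_mul _).add (iNN.const_mul _)).add (i00.const_mul _)) fun ω => ?_
      have hI : -⟪w t ω - w 0 ω, gradient f (w t ω)⟫
          ≤ ‖w t ω - w 0 ω‖ * ‖gradient f (w t ω)‖ := by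
        have := abs_real_inner_le_norm (w t ω - w 0 ω) (gradient f (w t ω))
        linarith [neg_abs_le (⟪w t ω - w 0 ω, gradient f (w t ω)⟫)]
      have hhb : ‖gradient f (w t ω)‖ ≤ ‖gradient f (w 0 ω)‖ + L * ‖w t ω - w 0 ω‖ := by
        have h1 := norm_sub_norm_le (gradient f (w t ω)) (gradient f (w 0 ω))
        have h2 := hsmooth (w t ω) (w 0 ω)
        linarith
      have hGb : ‖g t ω‖ ≤ ‖g t ω - gradient f (w t ω)‖ + ‖gradient f (w t ω)‖ := by
        have e : g t ω = (g t ω - gradient f (w t ω)) + gradient f (w t ω) := by abel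
        calc ‖g t ω‖ = ‖(g t ω - gradient f (w t ω)) + gradient f (w t ω)‖ := by rw [← e]
          _ ≤ _ := norm_add_le _ _
      exact scalar_step (T:ℝ) η L ‖w t ω - w 0 ω‖ ‖gradient f (w 0 ω)‖
        ‖g t ω - gradient f (w t ω)‖ ‖gradient f (w t ω)‖ ‖g t ω‖
        (⟪w t ω - w 0 ω, gradient f (w t ω)⟫) hT1 hη hL hηL (norm_nonneg _)
        (norm_nonneg _) (norm_nonneg _) (norm_nonneg _) (norm_nonneg _) hI hhb hGb
    have hval : ∫ ω, ((1 + 1/(T:ℝ)) * ‖w t ω - w 0 ω‖ ^ 2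
        + 2 * η ^ 2 * ‖g t ω - gradient f (w t ω)‖ ^ 2
        + (4 * T + 4) * η ^ 2 * ‖gradient f (w 0 ω)‖ ^ 2) ∂μ
        = (1 + 1/(T:ℝ)) * D t + 2 * η ^ 2 * (∫ ω, ‖g t ω - gradient f (w t ω)‖ ^ 2 ∂μ)
          + (4 * T + 4) * η ^ 2 * G := by
      have iR1 : Integrable (fun ω => (1 + 1/(T:ℝ)) * ‖w t ω - w 0 ω‖ ^ 2
          + 2 * η ^ 2 * ‖g t ω - gradient f (w t ω)‖ ^ 2) μ :=
        (iXX.const_mul _).add (iNN.const_mul _)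
      rw [integral_add iR1 (i00.const_mul _),
        integral_add (iXX.const_mul _) (iNN.const_mul _),
        integral_const_mul, integral_const_mul, integral_const_mul]
    have hvar' : 2 * η ^ 2 * (∫ ω, ‖g t ω - gradient f (w t ω)‖ ^ 2 ∂μ)
        ≤ 2 * η ^ 2 * χ ^ 2 :=
      mul_le_mul_of_nonneg_left (h_var t) (by positivity)
    rw [hval] at hmono
    rw [hCdef]
    linarith
  have hr1 : (1:ℝ) ≤ 1 + 1/(T:ℝ) := by
    have : (0:ℝ) ≤ 1/(T:ℝ) := by positivity
    linarith
  have hD0 : D 0 = 0 := by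
    simp only [hDdef, sub_self]
    simp
  have hind : ∀ t, D t ≤ ((1 + 1/(T:ℝ)) ^ t - 1) * ((T:ℝ) * C) := by
    intro t
    induction t with
    | zero => simp [hD0]
    | succ t ih =>
      have h1 := hstep t
      have h2 : (1 + 1/(T:ℝ)) * D t ≤ (1 + 1/(T:ℝ)) * (((1 + 1/(T:ℝ)) ^ t - 1) * ((T:ℝ) * C)) :=
        mul_le_mul_of_nonneg_left ih (by positivity)
      have h3 : (1 + 1/(T:ℝ)) * (((1 + 1/(T:ℝ)) ^ t - 1) * ((T:ℝ) * C)) + C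
          = ((1 + 1/(T:ℝ)) ^ (t + 1) - 1) * ((T:ℝ) * C) := by
        have hTne : (T:ℝ) ≠ 0 := ne_of_gt hT0
        have hq : (1 + 1/(T:ℝ)) * T = T + 1 := by
          rw [add_mul, one_div, inv_mul_cancel₀ hTne, one_mul]
        rw [pow_succ]
        linear_combination (-C) * hq
      linarith
  intro t ht
  have hpow : (1 + 1/(T:ℝ)) ^ t ≤ (1 + 1/(T:ℝ)) ^ T := pow_le_pow_right₀ hr1 ht
  have hexp : (1 + 1/(T:ℝ)) ^ T ≤ 3 := by
    have h1 : (1 + 1/(T:ℝ)) ≤ Real.exp (1/(T:ℝ)) := by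
      have := Real.add_one_le_exp (1/(T:ℝ))
      linarith
    calc (1 + 1/(T:ℝ)) ^ T ≤ Real.exp (1/(T:ℝ)) ^ T := pow_le_pow_left₀ (by positivity) h1 T
      _ = Real.exp ((T:ℝ) * (1/(T:ℝ))) := by rw [← Real.exp_nat_mul]
      _ = Real.exp 1 := by rw [mul_one_div_cancel (ne_of_gt hT0)]
      _ ≤ 3 := by linarith [Real.exp_one_lt_d9]
  have hTC : 0 ≤ (T:ℝ) * C := by positivity
  have hfin : D t ≤ 2 * ((T:ℝ) * C) := by
    have h4 : ((1 + 1/(T:ℝ)) ^ t - 1) * ((T:ℝ) * C) ≤ 2 * ((T:ℝ) * C) := by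
      apply mul_le_mul_of_nonneg_right _ hTC
      linarith
    exact (hind t).trans h4
  have hlast : 2 * ((T:ℝ) * C) ≤ 4 * T * η ^ 2 * χ ^ 2 + 16 * (T:ℝ) ^ 2 * η ^ 2 * G := by
    have e1 : 2 * ((T:ℝ) * C) = 4 * T * η ^ 2 * χ ^ 2 + (8 * (T:ℝ) ^ 2 + 8 * T) * η ^ 2 * G := by
      rw [hCdef]; ring
    have e2 : (8 * (T:ℝ) ^ 2 + 8 * T) * η ^ 2 * G ≤ 16 * (T:ℝ) ^ 2 * η ^ 2 * G := by
      have hTT : 8 * (T:ℝ) ^ 2 + 8 * T ≤ 16 * (T:ℝ) ^ 2 := by nlinarith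
      have := mul_le_mul_of_nonneg_right hTT (by positivity : (0:ℝ) ≤ η ^ 2 * G)
      ring_nf at this ⊢
      linarith
    linarith
  exact hfin.trans hlast
end

section
/- Set Δ := Σ_{t=0}^{T−1} g_t and ξ_t := g_t − ∇f(w_t). Assume η ≤ 1/(24TL) and that E[⟨ξ_t, ∇f(w_s)⟩] = 0 whenever 0 ≤ t < s ≤ T−1. Then for every constant c with 0 < c ≤ 1/2 − 8η²T²L²: E[ −η·⟨∇f(w_0), Δ⟩ + (η²L/2)·‖Δ‖² ] ≤ −cTη·E[‖∇f(w_0)‖²] + (η²TL/2)·(1 + 4ηTL)·χ². -/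
open MeasureTheory
open scoped RealInnerProductSpace


section Aux
variable {E : Type*} [NormedAddCommGroup E] [InnerProductSpace ℝ E]

theorem aux_integrable_inner {Ω : Type*} {mΩ : MeasurableSpace Ω} {μ : Measure Ω}
    {f g : Ω → E} (hf : MemLp f 2 μ) (hg : MemLp g 2 μ) :
    Integrable (fun ω => ⟪f ω, g ω⟫) μ := by
  have h := L2.integrable_inner (𝕜 := ℝ) (hf.toLp f) (hg.toLp g)
  apply h.congr
  filter_upwards [hf.coeFn_toLp, hg.coeFn_toLp] with ω h1 h2
  rw [h1, h2]

theorem aux_inner_toLp {Ω : Type*} {mΩ : MeasurableSpace Ω} {μ : Measure Ω}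
    {f g : Ω → E} (hf : MemLp f 2 μ) (hg : MemLp g 2 μ) :
    ⟪hf.toLp f, hg.toLp g⟫ = ∫ ω, ⟪f ω, g ω⟫ ∂μ := by
  rw [L2.inner_def]
  refine integral_congr_ae ?_
  filter_upwards [hf.coeFn_toLp, hg.coeFn_toLp] with ω h1 h2
  rw [h1, h2]

theorem aux_norm_toLp {Ω : Type*} {mΩ : MeasurableSpace Ω} {μ : Measure Ω}
    {f : Ω → E} (hf : MemLp f 2 μ) :
    ‖hf.toLp f‖ ^ 2 = ∫ ω, ‖f ω‖ ^ 2 ∂μ := by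
  rw [← real_inner_self_eq_norm_sq, aux_inner_toLp hf hf]
  refine integral_congr_ae ?_
  filter_upwards with ω
  rw [real_inner_self_eq_norm_sq]

theorem aux_int_sq {Ω : Type*} {mΩ : MeasurableSpace Ω} {μ : Measure Ω}
    {f : Ω → E} (hf : MemLp f 2 μ) :
    Integrable (fun ω => ‖f ω‖ ^ 2) μ := by
  apply (aux_integrable_inner hf hf).congr
  filter_upwards with ω
  rw [real_inner_self_eq_norm_sq]

theorem aux_coeFn_sum {Ω : Type*} {mΩ : MeasurableSpace Ω} {μ : Measure Ω}
    {ι : Type*} (r : Finset ι) (F : ι → Lp E 2 μ) :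
    ⇑(∑ i ∈ r, F i) =ᵐ[μ] fun ω => ∑ i ∈ r, F i ω := by
  classical
  induction r using Finset.cons_induction with
  | empty => simp only [Finset.sum_empty]; exact Lp.coeFn_zero (E := E) (p := 2) (μ := μ)
  | cons a s ha ih =>
    rw [Finset.sum_cons]
    filter_upwards [Lp.coeFn_add (F a) (∑ i ∈ s, F i), ih] with ω h1 h2
    rw [h1]
    simp only [Pi.add_apply, Finset.sum_cons, h2]

theorem aux_condexp_inner [CompleteSpace E] {Ω : Type*} {m mΩ : MeasurableSpace Ω} (hm : m ≤ mΩ)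
    {μ : Measure Ω} [IsProbabilityMeasure μ] (e : E) (Y : Ω → E)
    (hY : Integrable Y μ) :
    (fun ω => ⟪e, (μ[Y|m]) ω⟫) =ᵐ[μ] μ[fun ω => ⟪e, Y ω⟫|m] := by
  haveI : SigmaFinite (μ.trim hm) := by infer_instance
  refine ae_eq_condExp_of_forall_setIntegral_eq hm (hY.const_inner e)
    (fun s _ _ => (integrable_condExp.const_inner e).integrableOn)
    (fun s hs hμs => ?_) ?_
  · rw [integral_inner integrable_condExp.integrableOn e,
      setIntegral_condExp hm hY hs, ← integral_inner hY.integrableOn e]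
  · exact StronglyMeasurable.aestronglyMeasurable (stronglyMeasurable_const.inner stronglyMeasurable_condExp)

theorem aux_key {Ω : Type*} [FiniteDimensional ℝ E] {m mΩ : MeasurableSpace Ω} (hm : m ≤ mΩ)
    {μ : Measure Ω} [IsProbabilityMeasure μ] (X Y Z : Ω → E)
    (hXm : StronglyMeasurable[m] X) (hX2 : MemLp X 2 μ)
    (hY2 : MemLp Y 2 μ) (hZ2 : MemLp Z 2 μ)
    (hcond : μ[Y|m] =ᵐ[μ] Z) :
    ∫ ω, ⟪X ω, Y ω⟫ ∂μ = ∫ ω, ⟪X ω, Z ω⟫ ∂μ := by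
  haveI : SigmaFinite (μ.trim hm) := by infer_instance
  let b := stdOrthonormalBasis ℝ E
  have hYint : Integrable Y μ := hY2.integrable one_le_two
  have expand : ∀ (U : Ω → E), (fun ω => ⟪X ω, U ω⟫)
      = fun ω => ∑ i, ⟪X ω, b i⟫ * ⟪b i, U ω⟫ := by
    intro U; funext ω; rw [b.sum_inner_mul_inner]
  have hint : ∀ (U : Ω → E), MemLp U 2 μ → ∀ i : Fin (Module.finrank ℝ E),
      Integrable (fun ω => ⟪X ω, b i⟫ * ⟪b i, U ω⟫) μ := by
    intro U hU2 i
    have := aux_integrable_inner (E := ℝ) (hX2.inner_const (b i)) (hU2.const_inner (b i))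
    apply this.congr
    filter_upwards with ω
    simp [RCLike.inner_apply]; ring
  rw [expand Y, expand Z, integral_finset_sum _ (fun i _ => hint Y hY2 i),
    integral_finset_sum _ (fun i _ => hint Z hZ2 i)]
  refine Finset.sum_congr rfl fun i _ => ?_
  have ham : StronglyMeasurable[m] (fun ω => ⟪X ω, b i⟫) :=
    hXm.inner stronglyMeasurable_const
  have hcint : Integrable (fun ω => ⟪b i, Y ω⟫) μ := hYint.const_inner (b i)
  have h2 : μ[(fun ω => ⟪X ω, b i⟫) * (fun ω => ⟪b i, Y ω⟫)|m]
      =ᵐ[μ] (fun ω => ⟪X ω, b i⟫) * μ[(fun ω => ⟪b i, Y ω⟫)|m] :=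
    condExp_mul_of_stronglyMeasurable_left ham (hint Y hY2 i) hcint
  have h3 : μ[(fun ω => ⟪b i, Y ω⟫)|m] =ᵐ[μ] fun ω => ⟪b i, Z ω⟫ := by
    refine ((aux_condexp_inner hm (b i) Y hYint).symm).trans ?_
    filter_upwards [hcond] with ω hω
    simp only [hω]
  calc ∫ ω, ⟪X ω, b i⟫ * ⟪b i, Y ω⟫ ∂μ
      = ∫ ω, (μ[(fun ω => ⟪X ω, b i⟫) * (fun ω => ⟪b i, Y ω⟫)|m]) ω ∂μ :=
        (integral_condExp hm).symm
    _ = ∫ ω, ⟪X ω, b i⟫ * ⟪b i, Z ω⟫ ∂μ := by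
        refine integral_congr_ae ?_
        filter_upwards [h2, h3] with ω hω2 hω3
        rw [hω2]; simp only [Pi.mul_apply, hω3]

end Aux

set_option maxHeartbeats 1000000

/-- **Lemma 3 (GATTA).** Per-round descent estimate for one epoch of local SGD:
if `η ≤ 1/(24TL)` and the noises are orthogonal in `L²` to gradients at later steps, then
for every `c` with `0 < c ≤ 1/2 − 8η²T²L²`,
`E[−η⟨∇f(w₀), Δ⟩ + (η²L/2)‖Δ‖²] ≤ −cTη·E[‖∇f(w₀)‖²] + (η²TL/2)(1 + 4ηTL)χ²`. -/
theorem gatta_lemma3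
    {E : Type*} [NormedAddCommGroup E] [InnerProductSpace ℝ E] [FiniteDimensional ℝ E]
    {Ω : Type*} {mΩ : MeasurableSpace Ω} {μ : Measure Ω} [IsProbabilityMeasure μ]
    (ℱ : Filtration ℕ mΩ)
    (f : E → ℝ) (L : ℝ) (hL : 0 < L)
    (hdiff : Differentiable ℝ f)
    (hsmooth : ∀ x y : E, ‖gradient f x - gradient f y‖ ≤ L * ‖x - y‖)
    (T : ℕ) (hT : 1 ≤ T) (η : ℝ) (hη : 0 < η) (χ : ℝ) (hχ : 0 ≤ χ)
    (w g : ℕ → Ω → E)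
    (hupd : ∀ t, w (t + 1) = fun ω => w t ω - η • g t ω)
    (hw_meas : ∀ t, StronglyMeasurable[ℱ t] (w t))
    (hg_meas : ∀ t, StronglyMeasurable[ℱ (t + 1)] (g t))
    (hw_L2 : ∀ t, MemLp (w t) 2 μ)
    (hg_L2 : ∀ t, MemLp (g t) 2 μ)
    (h_unbiased : ∀ t, μ[g t | ℱ t] =ᵐ[μ] fun ω => gradient f (w t ω))
    (h_var : ∀ t, ∫ ω, ‖g t ω - gradient f (w t ω)‖ ^ 2 ∂μ ≤ χ ^ 2)
    (h_orth : ∀ t s : ℕ, t < s → s < T →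
      ∫ ω, ⟪g t ω - gradient f (w t ω), gradient f (w s ω)⟫ ∂μ = 0)
    (hη_small : η ≤ 1 / (24 * T * L))
    (c : ℝ) (hc0 : 0 < c) (hc1 : c ≤ 1 / 2 - 8 * η ^ 2 * T ^ 2 * L ^ 2) :
    ∫ ω, (-η * ⟪gradient f (w 0 ω), ∑ t ∈ Finset.range T, g t ω⟫
        + η ^ 2 * L / 2 * ‖∑ t ∈ Finset.range T, g t ω‖ ^ 2) ∂μ
      ≤ -(c * T * η) * ∫ ω, ‖gradient f (w 0 ω)‖ ^ 2 ∂μ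
        + η ^ 2 * T * L / 2 * (1 + 4 * η * T * L) * χ ^ 2 := by
  classical
  -- Lipschitz gradient
  have hlip : LipschitzWith (Real.toNNReal L) (gradient f) := by
    refine LipschitzWith.of_dist_le_mul fun x y => ?_
    rw [dist_eq_norm, dist_eq_norm, Real.coe_toNNReal L hL.le]
    exact hsmooth x y
  have hG_meas : ∀ t, StronglyMeasurable[ℱ t] (fun ω => gradient f (w t ω)) :=
    fun t => hlip.continuous.comp_stronglyMeasurable (hw_meas t)
  have hG_L2 : ∀ t, MemLp (fun ω => gradient f (w t ω)) 2 μ := by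
    intro t
    have h1 : MemLp (fun ω => gradient f (w t ω) - gradient f 0) 2 μ := by
      refine MemLp.of_le_mul (c := L) (hw_L2 t) ?_ ?_
      · exact (((hG_meas t).mono (ℱ.le t)).sub stronglyMeasurable_const).aestronglyMeasurable
      · filter_upwards with ω
        simpa using hsmooth (w t ω) 0
    have h2 := h1.add (memLp_const (gradient f 0))
    have h3 : (fun ω => gradient f (w t ω))
        = ((fun ω => gradient f (w t ω) - gradient f 0) + fun _ => gradient f 0) := by
      funext ω; simp only [Pi.add_apply]; abel
    rw [h3]; exact h2
  -- noise
  have hξ_L2 : ∀ t, MemLp (fun ω => g t ω - gradient f (w t ω)) 2 μ :=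
    fun t => (hg_L2 t).sub (hG_L2 t)
  have hξ_meas : ∀ t, StronglyMeasurable[ℱ (t + 1)]
      (fun ω => g t ω - gradient f (w t ω)) :=
    fun t => (hg_meas t).sub ((hG_meas t).mono (ℱ.mono (Nat.le_succ t)))
  -- Lp elements
  set Gp : ℕ → Lp E 2 μ := fun t => (hG_L2 t).toLp _ with hGpdef
  set gL : ℕ → Lp E 2 μ := fun t => (hg_L2 t).toLp _ with hgLdef
  set ξL : ℕ → Lp E 2 μ := fun t => (hξ_L2 t).toLp _ with hξLdef
  have hξL : ∀ t, ξL t = gL t - Gp t := fun t => MemLp.toLp_sub _ _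
  -- key orthogonality
  have hXξ : ∀ t (X : Ω → E), StronglyMeasurable[ℱ t] X → ∀ hX2 : MemLp X 2 μ,
      ⟪hX2.toLp X, ξL t⟫ = 0 := by
    intro t X hXm hX2
    rw [hξLdef, aux_inner_toLp hX2 (hξ_L2 t)]
    have hkey := aux_key (ℱ.le t) X (g t) (fun ω => gradient f (w t ω))
      hXm hX2 (hg_L2 t) (hG_L2 t) (h_unbiased t)
    have hsplit : ∫ ω, ⟪X ω, g t ω - gradient f (w t ω)⟫ ∂μ
        = ∫ ω, ⟪X ω, g t ω⟫ ∂μ - ∫ ω, ⟪X ω, gradient f (w t ω)⟫ ∂μ := by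
      rw [← integral_sub (aux_integrable_inner hX2 (hg_L2 t))
        (aux_integrable_inner hX2 (hG_L2 t))]
      refine integral_congr_ae ?_
      filter_upwards with ω
      rw [inner_sub_right]
    rw [hsplit, hkey, sub_self]
  have hGξ : ∀ s t, s < T → t < T → ⟪Gp s, ξL t⟫ = 0 := by
    intro s t hsT htT
    rcases le_or_gt s t with hst | hts
    · exact hXξ t _ ((hG_meas s).mono (ℱ.mono hst)) (hG_L2 s)
    · rw [hGpdef, hξLdef, aux_inner_toLp (hG_L2 s) (hξ_L2 t)]
      rw [show (∫ ω, ⟪gradient f (w s ω), g t ω - gradient f (w t ω)⟫ ∂μ)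
          = ∫ ω, ⟪g t ω - gradient f (w t ω), gradient f (w s ω)⟫ ∂μ from
        integral_congr_ae (by filter_upwards with ω; rw [real_inner_comm])]
      exact h_orth t s hts hsT
  have hξξ : ∀ s t, s < T → t < T → s ≠ t → ⟪ξL s, ξL t⟫ = 0 := by
    have base : ∀ s t, s < t → ⟪ξL s, ξL t⟫ = 0 := by
      intro s t hst
      exact hXξ t _ ((hξ_meas s).mono (ℱ.mono (Nat.succ_le_of_lt hst))) (hξ_L2 s)
    intro s t _ _ hne
    rcases lt_or_gt_of_ne hne with h | h
    · exact base s t h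
    · rw [real_inner_comm]; exact base t s h
  have hξnorm : ∀ t, ‖ξL t‖ ^ 2 ≤ χ ^ 2 := by
    intro t
    rw [hξLdef, aux_norm_toLp (hξ_L2 t)]
    exact h_var t
  -- sum bound
  have hSB : ∀ r : Finset ℕ, (∀ i ∈ r, i < T) →
      ‖∑ t ∈ r, gL t‖ ^ 2 ≤ (r.card : ℝ) * (∑ t ∈ r, ‖Gp t‖ ^ 2) + r.card * χ ^ 2 := by
    intro r hr
    have hsplit : ∑ t ∈ r, gL t = (∑ t ∈ r, Gp t) + ∑ t ∈ r, ξL t := by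
      rw [← Finset.sum_add_distrib]
      refine Finset.sum_congr rfl fun t _ => ?_
      rw [hξL t]; abel
    rw [hsplit, norm_add_sq_real]
    have hcross : ⟪∑ t ∈ r, Gp t, ∑ t ∈ r, ξL t⟫ = 0 := by
      rw [sum_inner]
      refine Finset.sum_eq_zero fun s hs => ?_
      rw [inner_sum]
      exact Finset.sum_eq_zero fun t ht => hGξ s t (hr s hs) (hr t ht)
    have hxi : ‖∑ t ∈ r, ξL t‖ ^ 2 ≤ (r.card : ℝ) * χ ^ 2 := by
      have heq : ‖∑ t ∈ r, ξL t‖ ^ 2 = ∑ t ∈ r, ‖ξL t‖ ^ 2 := by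
        rw [← real_inner_self_eq_norm_sq, sum_inner]
        refine Finset.sum_congr rfl fun s hs => ?_
        rw [inner_sum, Finset.sum_eq_single_of_mem s hs
          (fun t ht hts => hξξ s t (hr s hs) (hr t ht) (Ne.symm hts)),
          real_inner_self_eq_norm_sq]
      rw [heq]
      calc ∑ t ∈ r, ‖ξL t‖ ^ 2 ≤ ∑ _t ∈ r, χ ^ 2 :=
            Finset.sum_le_sum fun t _ => hξnorm t
        _ = (r.card : ℝ) * χ ^ 2 := by rw [Finset.sum_const, nsmul_eq_mul]
    have hGn : ‖∑ t ∈ r, Gp t‖ ^ 2 ≤ (r.card : ℝ) * ∑ t ∈ r, ‖Gp t‖ ^ 2 := by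
      have h1 : ‖∑ t ∈ r, Gp t‖ ≤ ∑ t ∈ r, ‖Gp t‖ := norm_sum_le _ _
      have h2 : (∑ t ∈ r, ‖Gp t‖) ^ 2 ≤ (r.card : ℝ) * ∑ t ∈ r, ‖Gp t‖ ^ 2 :=
        sq_sum_le_card_mul_sum_sq
      have h3 : ‖∑ t ∈ r, Gp t‖ ^ 2 ≤ (∑ t ∈ r, ‖Gp t‖) ^ 2 :=
        pow_le_pow_left₀ (norm_nonneg _) h1 2
      linarith
    linarith
  -- coe of sums of gL
  have hgcoe : ∀ᵐ ω ∂μ, ∀ t, gL t ω = g t ω :=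
    ae_all_iff.mpr fun t => (hg_L2 t).coeFn_toLp
  have hsumcoe : ∀ r : Finset ℕ,
      ⇑(∑ t ∈ r, gL t) =ᵐ[μ] fun ω => ∑ t ∈ r, g t ω := by
    intro r
    filter_upwards [aux_coeFn_sum r gL, hgcoe] with ω h1 h2
    rw [h1]
    exact Finset.sum_congr rfl fun t _ => h2 t
  have hnormsum : ∀ r : Finset ℕ,
      ‖∑ t ∈ r, gL t‖ ^ 2 = ∫ ω, ‖∑ t ∈ r, g t ω‖ ^ 2 ∂μ := by
    intro r
    rw [← real_inner_self_eq_norm_sq, L2.inner_def]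
    refine integral_congr_ae ?_
    filter_upwards [hsumcoe r] with ω h1
    rw [h1, real_inner_self_eq_norm_sq]
  -- w displacement
  have hwdiff : ∀ t ω, w t ω - w 0 ω = -(η • ∑ s ∈ Finset.range t, g s ω) := by
    intro t
    induction t with
    | zero => intro ω; simp
    | succ t ih =>
      intro ω
      have : w (t + 1) ω = w t ω - η • g t ω := by rw [hupd t]
      rw [this, Finset.sum_range_succ, smul_add, neg_add]
      have := ih ω
      rw [sub_right_comm, this]
      abel
  -- B bound
  have hB : ∀ t, t < T → ‖Gp 0 - Gp t‖ ^ 2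
      ≤ (L * η) ^ 2 * ‖∑ s ∈ Finset.range t, gL s‖ ^ 2 := by
    intro t _
    have hsub2 : MemLp (fun ω => gradient f (w 0 ω) - gradient f (w t ω)) 2 μ :=
      (hG_L2 0).sub (hG_L2 t)
    have hP2 : MemLp (fun ω => ∑ s ∈ Finset.range t, g s ω) 2 μ := by
      have h := memLp_finset_sum' (μ := μ) (Finset.range t) (fun s _ => hg_L2 s)
      have heq : (∑ i ∈ Finset.range t, g i) = fun ω => ∑ s ∈ Finset.range t, g s ω := by
        funext ω; simp
      rwa [heq] at h
    have heq : ‖Gp 0 - Gp t‖ ^ 2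
        = ∫ ω, ‖gradient f (w 0 ω) - gradient f (w t ω)‖ ^ 2 ∂μ := by
      rw [hGpdef]
      rw [show (hG_L2 0).toLp _ - (hG_L2 t).toLp _ = hsub2.toLp _ from
        (MemLp.toLp_sub _ _).symm]
      exact aux_norm_toLp hsub2
    rw [heq, hnormsum]
    have hpt : ∀ ω, ‖gradient f (w 0 ω) - gradient f (w t ω)‖ ^ 2
        ≤ (L * η) ^ 2 * ‖∑ s ∈ Finset.range t, g s ω‖ ^ 2 := by
      intro ω
      have h1 : ‖gradient f (w 0 ω) - gradient f (w t ω)‖ ≤ L * ‖w 0 ω - w t ω‖ :=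
        hsmooth _ _
      have h2 : ‖w 0 ω - w t ω‖ = η * ‖∑ s ∈ Finset.range t, g s ω‖ := by
        rw [← norm_neg, neg_sub, hwdiff t ω, norm_neg, norm_smul,
          Real.norm_eq_abs, abs_of_pos hη]
      have h3 : ‖gradient f (w 0 ω) - gradient f (w t ω)‖
          ≤ L * η * ‖∑ s ∈ Finset.range t, g s ω‖ := by
        rw [mul_assoc, ← h2]; exact h1
      have h4 := pow_le_pow_left₀ (norm_nonneg _) h3 2
      calc ‖gradient f (w 0 ω) - gradient f (w t ω)‖ ^ 2
          ≤ (L * η * ‖∑ s ∈ Finset.range t, g s ω‖) ^ 2 := h4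
        _ = (L * η) ^ 2 * ‖∑ s ∈ Finset.range t, g s ω‖ ^ 2 := by ring
    refine le_trans (integral_mono (aux_int_sq hsub2)
      ((aux_int_sq hP2).const_mul _) (fun ω => hpt ω)) ?_
    rw [integral_const_mul]
  -- main inner product expansion
  have hIP : ⟪Gp 0, ∑ t ∈ Finset.range T, gL t⟫
      = ∑ t ∈ Finset.range T,
        (‖Gp 0‖ ^ 2 + ‖Gp t‖ ^ 2 - ‖Gp 0 - Gp t‖ ^ 2) / 2 := by
    rw [inner_sum]
    refine Finset.sum_congr rfl fun t ht => ?_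
    have ht' := Finset.mem_range.mp ht
    have h1 : gL t = Gp t + ξL t := by rw [hξL t]; abel
    have h2 : ⟪Gp 0, gL t⟫ = ⟪Gp 0, Gp t⟫ := by
      rw [h1, inner_add_right, hGξ 0 t hT ht', add_zero]
    rw [h2]
    have h3 := norm_sub_sq_real (Gp 0) (Gp t)
    linarith
  -- LHS decomposition
  have hΔ2 : MemLp (fun ω => ∑ t ∈ Finset.range T, g t ω) 2 μ := by
    have h := memLp_finset_sum' (μ := μ) (Finset.range T) (fun s _ => hg_L2 s)
    have heq : (∑ i ∈ Finset.range T, g i) = fun ω => ∑ t ∈ Finset.range T, g t ω := by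
      funext ω; simp
    rwa [heq] at h
  have hinnerΔ : ⟪Gp 0, ∑ t ∈ Finset.range T, gL t⟫
      = ∫ ω, ⟪gradient f (w 0 ω), ∑ t ∈ Finset.range T, g t ω⟫ ∂μ := by
    rw [L2.inner_def]
    refine integral_congr_ae ?_
    filter_upwards [(hG_L2 0).coeFn_toLp, hsumcoe (Finset.range T)] with ω h1 h2
    rw [hGpdef]
    simp only [h1, h2]
  have hLHS : ∫ ω, (-η * ⟪gradient f (w 0 ω), ∑ t ∈ Finset.range T, g t ω⟫
        + η ^ 2 * L / 2 * ‖∑ t ∈ Finset.range T, g t ω‖ ^ 2) ∂μ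
      = -η * ⟪Gp 0, ∑ t ∈ Finset.range T, gL t⟫
        + η ^ 2 * L / 2 * ‖∑ t ∈ Finset.range T, gL t‖ ^ 2 := by
    rw [integral_add ((aux_integrable_inner (hG_L2 0) hΔ2).const_mul (-η))
      ((aux_int_sq hΔ2).const_mul (η ^ 2 * L / 2)),
      integral_const_mul, integral_const_mul, hinnerΔ, hnormsum (Finset.range T)]
  -- numeric part
  set a := ‖Gp 0‖ ^ 2 with ha_def
  set S := ∑ t ∈ Finset.range T, ‖Gp t‖ ^ 2 with hS_def
  have hRHSint : ∫ ω, ‖gradient f (w 0 ω)‖ ^ 2 ∂μ = a := (aux_norm_toLp (hG_L2 0)).symm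
  have hSnonneg : 0 ≤ S := Finset.sum_nonneg fun t _ => sq_nonneg _
  have ha : 0 ≤ a := sq_nonneg _
  have hχ2 : 0 ≤ χ ^ 2 := sq_nonneg _
  have hT1 : (1 : ℝ) ≤ (T : ℝ) := by exact_mod_cast hT
  -- N bound
  have hN : ∀ t, t < T → ‖∑ s ∈ Finset.range t, gL s‖ ^ 2
      ≤ (T : ℝ) * S + (T : ℝ) * χ ^ 2 := by
    intro t htT
    have h1 := hSB (Finset.range t) (fun i hi => lt_trans (Finset.mem_range.mp hi) htT)
    rw [Finset.card_range] at h1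
    have htle : (t : ℝ) ≤ (T : ℝ) := by exact_mod_cast htT.le
    have hsub : ∑ s ∈ Finset.range t, ‖Gp s‖ ^ 2 ≤ S := by
      refine Finset.sum_le_sum_of_subset_of_nonneg
        (Finset.range_subset_range.mpr htT.le) fun i _ _ => sq_nonneg _
    have hpos : 0 ≤ ∑ s ∈ Finset.range t, ‖Gp s‖ ^ 2 :=
      Finset.sum_nonneg fun s _ => sq_nonneg _
    nlinarith
  have hD : ‖∑ t ∈ Finset.range T, gL t‖ ^ 2 ≤ (T : ℝ) * S + (T : ℝ) * χ ^ 2 := by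
    have h1 := hSB (Finset.range T) (fun i hi => Finset.mem_range.mp hi)
    rw [Finset.card_range] at h1
    linarith [h1]
  -- sum of B's
  have hBs : ∑ t ∈ Finset.range T, ‖Gp 0 - Gp t‖ ^ 2
      ≤ (T : ℝ) * ((L * η) ^ 2 * ((T : ℝ) * S + (T : ℝ) * χ ^ 2)) := by
    calc ∑ t ∈ Finset.range T, ‖Gp 0 - Gp t‖ ^ 2
        ≤ ∑ _t ∈ Finset.range T, (L * η) ^ 2 * ((T : ℝ) * S + (T : ℝ) * χ ^ 2) := by
          refine Finset.sum_le_sum fun t ht => ?_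
          have ht' := Finset.mem_range.mp ht
          refine (hB t ht').trans ?_
          have := hN t ht'
          nlinarith [sq_nonneg (L * η)]
      _ = (T : ℝ) * ((L * η) ^ 2 * ((T : ℝ) * S + (T : ℝ) * χ ^ 2)) := by
          rw [Finset.sum_const, Finset.card_range, nsmul_eq_mul]
  -- assemble
  rw [hLHS, hRHSint, hIP]
  have hsum_expand : ∑ t ∈ Finset.range T,
      (‖Gp 0‖ ^ 2 + ‖Gp t‖ ^ 2 - ‖Gp 0 - Gp t‖ ^ 2) / 2
      = ((T : ℝ) * a + S - ∑ t ∈ Finset.range T, ‖Gp 0 - Gp t‖ ^ 2) / 2 := by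
    rw [← Finset.sum_div]
    congr 1
    rw [Finset.sum_sub_distrib, Finset.sum_add_distrib, Finset.sum_const,
      Finset.card_range, nsmul_eq_mul]
  rw [hsum_expand]
  set Bs := ∑ t ∈ Finset.range T, ‖Gp 0 - Gp t‖ ^ 2 with hBs_def
  set D := ‖∑ t ∈ Finset.range T, gL t‖ ^ 2 with hD_def
  have hBsnn : 0 ≤ Bs := Finset.sum_nonneg fun t _ => sq_nonneg _
  have hDnn : 0 ≤ D := sq_nonneg _
  have hκ : η * (24 * (T : ℝ) * L) ≤ 1 := by
    have hpos : 0 < 24 * (T : ℝ) * L := by positivity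
    rw [le_div_iff₀ hpos] at hη_small
    linarith
  have hu0 : (0:ℝ) ≤ η * (T:ℝ) * L := by positivity
  have hu : η * (T:ℝ) * L ≤ 1/24 := by nlinarith [hκ]
  have hc2 : c ≤ 1/2 := by nlinarith [sq_nonneg (η * (T:ℝ) * L), hc1]
  have hp3 : c * ((T:ℝ) * η * a) ≤ (1/2) * ((T:ℝ) * η * a) :=
    mul_le_mul_of_nonneg_right hc2 (mul_nonneg (mul_nonneg (Nat.cast_nonneg T) hη.le) ha)
  have hp1 : (η/2) * Bs ≤ (η/2) * ((T:ℝ) * ((L*η)^2 * ((T:ℝ)*S + (T:ℝ)*χ^2))) :=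
    mul_le_mul_of_nonneg_left hBs (by positivity)
  have hp2 : (η^2*L/2) * D ≤ (η^2*L/2) * ((T:ℝ)*S + (T:ℝ)*χ^2) :=
    mul_le_mul_of_nonneg_left hD (by positivity)
  have hSu : (η * (T:ℝ) * L) * (η * S) ≤ (1/24) * (η * S) :=
    mul_le_mul_of_nonneg_right hu (mul_nonneg hη.le hSnonneg)
  have hSu2 : ((η * (T:ℝ) * L) * (η * (T:ℝ) * L)) * (η * S)
      ≤ (1/24) * (1/24) * (η * S) := by
    nlinarith [mul_nonneg hη.le hSnonneg, hu, hu0]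
  linarith [hp1, hp2, hp3, hSu, hSu2, mul_nonneg hη.le hSnonneg,
    mul_nonneg (mul_nonneg hu0 hu0) (mul_nonneg hη.le hχ2)]
end

section
/- Let Ã be an N×N real matrix with Ã·𝟙_N = 𝟙_N and 𝟙_Nᵀ·Ã = 𝟙_Nᵀ (doubly stochastic), and set Q := (1/N)·𝟙_N·𝟙_Nᵀ. Let W^{(0)} = w·𝟙_Nᵀ for some w ∈ ℝ^d (identical columns), let Ξ^{(0)}, Ξ^{(1)}, … be d×N real matrices, let η ∈ ℝ, and define W^{(k)} := (W^{(k−1)} − η·Ξ^{(k−1)})·Ã for k ≥ 1. Then for every k ≥ 1: W^{(k)}·(I_N − Q) = −η·Σ_{s=0}^{k−1} Ξ^{(s)}·(Ã^{k−s} − Q). -/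
/-- **Residual error decomposition (Lemma 2 of Li et al., adapted).** If all columns of
`W⁽⁰⁾` are equal and `W⁽ᵏ⁾ = (W⁽ᵏ⁻¹⁾ − η·Ξ⁽ᵏ⁻¹⁾)·Ã` with `Ã` doubly stochastic, then with
`Q = (1/N)·𝟙𝟙ᵀ` one has `W⁽ᵏ⁾·(I − Q) = −η·Σ_{s=0}^{k−1} Ξ⁽ˢ⁾·(Ãᵏ⁻ˢ − Q)` for all `k ≥ 1`. -/
theorem residual_error_decomposition
    {d N : ℕ}
    (A : Matrix (Fin N) (Fin N) ℝ)
    (hrow : A.mulVec 1 = 1) (hcol : Matrix.vecMul 1 A = 1)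
    (w : Fin d → ℝ) (Ξ : ℕ → Matrix (Fin d) (Fin N) ℝ) (η : ℝ)
    (W : ℕ → Matrix (Fin d) (Fin N) ℝ)
    (hW0 : W 0 = Matrix.of fun i _ => w i)
    (hrec : ∀ k : ℕ, W (k + 1) = (W k - η • Ξ k) * A) :
    ∀ k : ℕ, 1 ≤ k →
      W k * ((1 : Matrix (Fin N) (Fin N) ℝ) - Matrix.of fun _ _ => (N : ℝ)⁻¹)
        = (-η) • ∑ s ∈ Finset.range k,
            Ξ s * (A ^ (k - s) - Matrix.of fun _ _ => (N : ℝ)⁻¹) := by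
  rcases Nat.eq_zero_or_pos N with hN | hN
  · intro k hk
    subst hN
    apply Subsingleton.elim
  set Q : Matrix (Fin N) (Fin N) ℝ := Matrix.of fun _ _ => (N : ℝ)⁻¹ with hQdef
  have hNne : (N : ℝ) ≠ 0 := Nat.cast_ne_zero.mpr hN.ne'
  have hrow' : ∀ i, ∑ j, A i j = 1 := by
    intro i
    have := congrFun hrow i
    simpa [Matrix.mulVec, dotProduct] using this
  have hcol' : ∀ j, ∑ i, A i j = 1 := by
    intro j
    have := congrFun hcol j
    simpa [Matrix.vecMul, dotProduct] using this
  have hAQ : A * Q = Q := by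
    ext i j
    simp [hQdef, Matrix.mul_apply, ← Finset.sum_mul, hrow' i]
  have hQA : Q * A = Q := by
    ext i j
    simp [hQdef, Matrix.mul_apply, ← Finset.mul_sum, hcol' j]
  have hcomm : A * (1 - Q) = (1 - Q) * A := by
    rw [mul_sub, sub_mul, hAQ, hQA, mul_one, one_mul]
  have hW0A : W 0 * A = W 0 := by
    rw [hW0]; ext i j
    simp [Matrix.mul_apply, ← Finset.mul_sum, hcol' j]
  have hW0Q : W 0 * Q = W 0 := by
    rw [hW0]; ext i j
    simp only [hQdef, Matrix.mul_apply, Matrix.of_apply, Finset.sum_const,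
      Finset.card_univ, Fintype.card_fin, nsmul_eq_mul]
    field_simp
  have h1QA : ((1 : Matrix (Fin N) (Fin N) ℝ) - Q) * A = A - Q := by
    rw [Matrix.sub_mul, Matrix.one_mul, hQA]
  have hW0proj : W 0 * ((1 : Matrix (Fin N) (Fin N) ℝ) - Q) = 0 := by
    rw [Matrix.mul_sub, Matrix.mul_one, hW0Q, sub_self]
  intro k hk
  induction k, hk using Nat.le_induction with
  | base =>
    rw [hrec 0, Matrix.mul_assoc, hcomm, ← Matrix.mul_assoc, Matrix.sub_mul,
      Matrix.sub_mul, hW0proj, Matrix.zero_mul, Matrix.smul_mul, Matrix.smul_mul,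
      Matrix.mul_assoc (Ξ 0), h1QA, zero_sub, Finset.sum_range_one, pow_one, neg_smul]
  | succ k hk ih =>
    have key : W (k+1) * (1 - Q) = (W k * (1 - Q)) * A - η • (Ξ k * (A - Q)) := by
      rw [hrec k, Matrix.mul_assoc, hcomm, ← Matrix.mul_assoc, Matrix.sub_mul,
        Matrix.sub_mul, Matrix.smul_mul, Matrix.smul_mul, Matrix.mul_assoc (Ξ k), h1QA]
    have hterm : ∀ s ∈ Finset.range k,
        Ξ s * (A ^ (k - s) - Q) * A = Ξ s * (A ^ (k + 1 - s) - Q) := by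
      intro s hs
      rw [Finset.mem_range] at hs
      rw [Matrix.mul_assoc, sub_mul, hQA, ← pow_succ, Nat.succ_sub (le_of_lt hs)]
    rw [key, ih, Matrix.smul_mul, Matrix.sum_mul, Finset.sum_congr rfl hterm,
      Finset.sum_range_succ, Nat.add_sub_cancel_left, pow_one, smul_add]
    module
end

section
/- Suppose that for every w ∈ E: (1/N)·Σ_{i=1}^N ‖∇f_i(w) − (1/N)·Σ_{j=1}^N ∇f_j(w)‖² ≤ κ². Then for all points w_1, …, w_N ∈ E with w̄ := (1/N)·Σ_{i=1}^N w_i: (1/N)·Σ_{i=1}^N ‖∇f_i(w_i)‖² ≤ (8L²/N)·Σ_{i=1}^N ‖w_i − w̄‖² + 4κ² + 4·‖(1/N)·Σ_{i=1}^N ∇f_i(w_i)‖². -/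
/-- Jensen: `‖(1/N)•∑ v i‖² ≤ (1/N)∑‖v i‖²`. -/
lemma avg_norm_sq_le {E : Type*} [NormedAddCommGroup E] [NormedSpace ℝ E] {N : ℕ} (hN : 0 < N)
    (v : Fin N → E) :
    ‖(N : ℝ)⁻¹ • ∑ i, v i‖ ^ 2 ≤ (N : ℝ)⁻¹ * ∑ i, ‖v i‖ ^ 2 := by
  have hNpos : (0:ℝ) < N := by exact_mod_cast hN
  have h1 : ‖∑ i, v i‖ ≤ ∑ i, ‖v i‖ := norm_sum_le _ _
  have h2 : (∑ i, ‖v i‖) ^ 2 ≤ (N : ℝ) * ∑ i, ‖v i‖ ^ 2 := by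
    have := sq_sum_le_card_mul_sum_sq (s := (Finset.univ : Finset (Fin N)))
      (f := fun i => ‖v i‖)
    simpa using this
  have h3 : ‖∑ i, v i‖ ^ 2 ≤ (N : ℝ) * ∑ i, ‖v i‖ ^ 2 := by
    calc ‖∑ i, v i‖ ^ 2 ≤ (∑ i, ‖v i‖) ^ 2 := by
          exact pow_le_pow_left₀ (norm_nonneg _) h1 2
      _ ≤ _ := h2
  rw [norm_smul]
  have : ‖(N:ℝ)⁻¹‖ = (N:ℝ)⁻¹ := by
    rw [Real.norm_eq_abs, abs_of_pos (by positivity)]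
  rw [this, mul_pow]
  rw [show ((N:ℝ)⁻¹)^2 = (N:ℝ)⁻¹ * (N:ℝ)⁻¹ by ring]
  rw [mul_assoc]
  gcongr
  calc (N:ℝ)⁻¹ * ‖∑ i, v i‖^2 ≤ (N:ℝ)⁻¹ * ((N:ℝ) * ∑ i, ‖v i‖^2) := by gcongr
    _ = ∑ i, ‖v i‖^2 := by field_simp

lemma four_sq {E : Type*} [NormedAddCommGroup E] (a b c d : E) :
    ‖a + b + c + d‖ ^ 2 ≤ 4 * (‖a‖^2 + ‖b‖^2 + ‖c‖^2 + ‖d‖^2) := by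
  have h : ‖a + b + c + d‖ ≤ ‖a‖ + ‖b‖ + ‖c‖ + ‖d‖ := by
    calc ‖a + b + c + d‖ ≤ ‖a + b + c‖ + ‖d‖ := norm_add_le _ _
      _ ≤ ‖a + b‖ + ‖c‖ + ‖d‖ := by gcongr; exact norm_add_le _ _
      _ ≤ ‖a‖ + ‖b‖ + ‖c‖ + ‖d‖ := by gcongr; exact norm_add_le _ _
  nlinarith [norm_nonneg (a+b+c+d), norm_nonneg a, norm_nonneg b, norm_nonneg c,
    norm_nonneg d, sq_nonneg (‖a‖-‖b‖), sq_nonneg (‖a‖-‖c‖), sq_nonneg (‖a‖-‖d‖),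
    sq_nonneg (‖b‖-‖c‖), sq_nonneg (‖b‖-‖d‖), sq_nonneg (‖c‖-‖d‖)]

/-- **Bound on second moments of gradients (Lemma 4 of Li et al.).** If the local `L`-smooth
objectives have heterogeneity at most `κ²`, then
`(1/N)Σᵢ‖∇fᵢ(wᵢ)‖² ≤ (8L²/N)Σᵢ‖wᵢ − w̄‖² + 4κ² + 4‖(1/N)Σᵢ∇fᵢ(wᵢ)‖²`,
where `w̄` is the average of the `wᵢ`. -/
theorem gradient_second_moment_bound
    {E : Type*} [NormedAddCommGroup E] [InnerProductSpace ℝ E] [CompleteSpace E]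
    {N : ℕ} (hN : 0 < N)
    (f : Fin N → E → ℝ) (L : ℝ) (hL : 0 < L) (κ : ℝ) (hκ : 0 ≤ κ)
    (hdiff : ∀ i, Differentiable ℝ (f i))
    (hsmooth : ∀ i, ∀ x y : E, ‖gradient (f i) x - gradient (f i) y‖ ≤ L * ‖x - y‖)
    (hhet : ∀ w : E,
      (N : ℝ)⁻¹ * ∑ i, ‖gradient (f i) w - (N : ℝ)⁻¹ • ∑ j, gradient (f j) w‖ ^ 2 ≤ κ ^ 2)
    (w : Fin N → E) :
    (N : ℝ)⁻¹ * ∑ i, ‖gradient (f i) (w i)‖ ^ 2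
      ≤ 8 * L ^ 2 / N * ∑ i, ‖w i - (N : ℝ)⁻¹ • ∑ j, w j‖ ^ 2
        + 4 * κ ^ 2 + 4 * ‖(N : ℝ)⁻¹ • ∑ i, gradient (f i) (w i)‖ ^ 2 := by
  have hNpos : (0:ℝ) < N := by exact_mod_cast hN
  set wbar : E := (N : ℝ)⁻¹ • ∑ j, w j with hwbar
  set g : Fin N → E := fun i => gradient (f i) (w i) with hg
  set h : Fin N → E := fun i => gradient (f i) wbar with hh
  set gbar : E := (N : ℝ)⁻¹ • ∑ i, g i with hgbar
  set hbar : E := (N : ℝ)⁻¹ • ∑ i, h i with hhbar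
  set S : ℝ := ∑ i, ‖w i - wbar‖ ^ 2 with hS
  have hS0 : 0 ≤ S := Finset.sum_nonneg fun i _ => by positivity
  -- pointwise bound
  have key : ∀ i, ‖g i‖ ^ 2 ≤
      4 * (‖g i - h i‖^2 + ‖h i - hbar‖^2 + ‖hbar - gbar‖^2 + ‖gbar‖^2) := by
    intro i
    have := four_sq (g i - h i) (h i - hbar) (hbar - gbar) gbar
    have heq : g i - h i + (h i - hbar) + (hbar - gbar) + gbar = g i := by abel
    rwa [heq] at this
  -- A: smoothness bounds
  have hA : ∀ i, ‖g i - h i‖ ^ 2 ≤ L^2 * ‖w i - wbar‖^2 := by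
    intro i
    have := hsmooth i (w i) wbar
    have h0 : 0 ≤ ‖g i - h i‖ := norm_nonneg _
    nlinarith [norm_nonneg (w i - wbar)]
  -- C: ‖hbar - gbar‖² ≤ L² (1/N) S
  have hC : ‖hbar - gbar‖ ^ 2 ≤ L^2 * ((N:ℝ)⁻¹ * S) := by
    have heq : hbar - gbar = (N : ℝ)⁻¹ • ∑ i, (h i - g i) := by
      rw [hhbar, hgbar, Finset.sum_sub_distrib, smul_sub]
    rw [heq]
    calc ‖(N : ℝ)⁻¹ • ∑ i, (h i - g i)‖ ^ 2
        ≤ (N:ℝ)⁻¹ * ∑ i, ‖h i - g i‖^2 := avg_norm_sq_le hN _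
      _ ≤ (N:ℝ)⁻¹ * ∑ i, L^2 * ‖w i - wbar‖^2 := by
          gcongr with i _
          have := hA i
          rwa [show h i - g i = -(g i - h i) by abel, norm_neg]
      _ = L^2 * ((N:ℝ)⁻¹ * S) := by rw [← Finset.mul_sum]; ring
  -- B: heterogeneity at wbar
  have hB : (N:ℝ)⁻¹ * ∑ i, ‖h i - hbar‖^2 ≤ κ^2 := hhet wbar
  -- combine
  have hsum : (N:ℝ)⁻¹ * ∑ i, ‖g i‖^2 ≤
      4 * ((N:ℝ)⁻¹ * ∑ i, ‖g i - h i‖^2) + 4 * ((N:ℝ)⁻¹ * ∑ i, ‖h i - hbar‖^2)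
      + 4 * ‖hbar - gbar‖^2 + 4 * ‖gbar‖^2 := by
    have h1 : ∑ i, ‖g i‖^2 ≤ ∑ i, (4 * (‖g i - h i‖^2 + ‖h i - hbar‖^2
        + ‖hbar - gbar‖^2 + ‖gbar‖^2)) := Finset.sum_le_sum fun i _ => key i
    have h2 : ∑ i, (4 * (‖g i - h i‖^2 + ‖h i - hbar‖^2 + ‖hbar - gbar‖^2 + ‖gbar‖^2))
        = 4 * ∑ i, ‖g i - h i‖^2 + 4 * ∑ i, ‖h i - hbar‖^2
          + (N:ℝ) * (4 * ‖hbar - gbar‖^2) + (N:ℝ) * (4 * ‖gbar‖^2) := by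
      simp only [mul_add, Finset.sum_add_distrib, Finset.sum_const, Finset.card_univ,
        Fintype.card_fin, nsmul_eq_mul, ← Finset.mul_sum]
    have h3 : (N:ℝ)⁻¹ * ∑ i, ‖g i‖^2 ≤ (N:ℝ)⁻¹ * (4 * ∑ i, ‖g i - h i‖^2
        + 4 * ∑ i, ‖h i - hbar‖^2 + (N:ℝ) * (4 * ‖hbar - gbar‖^2)
        + (N:ℝ) * (4 * ‖gbar‖^2)) := by
      rw [← h2]; gcongr
    calc (N:ℝ)⁻¹ * ∑ i, ‖g i‖^2 ≤ _ := h3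
      _ = 4 * ((N:ℝ)⁻¹ * ∑ i, ‖g i - h i‖^2) + 4 * ((N:ℝ)⁻¹ * ∑ i, ‖h i - hbar‖^2)
          + 4 * ‖hbar - gbar‖^2 + 4 * ‖gbar‖^2 := by field_simp
  have hAsum : (N:ℝ)⁻¹ * ∑ i, ‖g i - h i‖^2 ≤ L^2 * ((N:ℝ)⁻¹ * S) := by
    calc (N:ℝ)⁻¹ * ∑ i, ‖g i - h i‖^2 ≤ (N:ℝ)⁻¹ * ∑ i, L^2 * ‖w i - wbar‖^2 := by
          gcongr with i _
          exact hA i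
      _ = L^2 * ((N:ℝ)⁻¹ * S) := by rw [← Finset.mul_sum]; ring
  have hdiv : 8 * L^2 / N * S = 8 * (L^2 * ((N:ℝ)⁻¹ * S)) := by
    field_simp
  have hfin : (N:ℝ)⁻¹ * ∑ i, ‖g i‖^2 ≤
      8 * L^2 / N * S + 4 * κ^2 + 4 * ‖gbar‖^2 := by
    rw [hdiv]
    linarith [hsum, hAsum, hB, hC]
  exact hfin
end

section
/- Assume η ≤ 1/(24TL). Then Σ_{i=1}^N E[‖Σ_{t=0}^{T−1} ∇f_i(w_{i,t})‖²] ≤ 3T²·Σ_{i=1}^N E[‖∇f_i(w_i)‖²] + 8·T³·η²·χ²·L²·N. -/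
open MeasureTheory
open scoped RealInnerProductSpace

set_option linter.unusedSectionVars false
set_option linter.unusedVariables false


section Helpers

variable {Ω : Type*} {mΩ : MeasurableSpace Ω} {μ : Measure Ω}
variable {E : Type*} [NormedAddCommGroup E] [InnerProductSpace ℝ E] [FiniteDimensional ℝ E]

lemma agb_sq_norm_toLp (h : Ω → E) (hh : MemLp h 2 μ) :
    ‖hh.toLp h‖ ^ 2 = ∫ ω, ‖h ω‖ ^ 2 ∂μ := by
  rw [← real_inner_self_eq_norm_sq, L2.inner_def]
  refine integral_congr_ae ?_
  filter_upwards [hh.coeFn_toLp] with ω hω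
  rw [hω, real_inner_self_eq_norm_sq]

lemma agb_integrable_sq_norm (h : Ω → E) (hh : MemLp h 2 μ) :
    Integrable (fun ω => ‖h ω‖ ^ 2) μ :=
  hh.norm.integrable_sq

lemma agb_norm_toLp_le_mul {h k : Ω → E} (hh : MemLp h 2 μ) (hk : MemLp k 2 μ)
    {c : ℝ} (hc : 0 ≤ c) (hle : ∀ ω, ‖h ω‖ ≤ c * ‖k ω‖) :
    ‖hh.toLp h‖ ≤ c * ‖hk.toLp k‖ := by
  have h2 : ‖hh.toLp h‖ ^ 2 ≤ (c * ‖hk.toLp k‖) ^ 2 := by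
    rw [agb_sq_norm_toLp, mul_pow, agb_sq_norm_toLp, ← integral_const_mul]
    refine integral_mono (agb_integrable_sq_norm h hh)
      ((agb_integrable_sq_norm k hk).const_mul _) fun ω => ?_
    calc ‖h ω‖ ^ 2 ≤ (c * ‖k ω‖) ^ 2 := by
          apply pow_le_pow_left₀ (norm_nonneg _) (hle ω)
      _ = c ^ 2 * ‖k ω‖ ^ 2 := mul_pow _ _ _
  exact (pow_le_pow_iff_left₀ (norm_nonneg _) (by positivity) two_ne_zero).mp h2

end Helpers


set_option linter.unusedSectionVars false

section Helpers2

variable {Ω : Type*} {mΩ : MeasurableSpace Ω} {μ : Measure Ω}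
variable {E : Type*} [NormedAddCommGroup E] [InnerProductSpace ℝ E] [FiniteDimensional ℝ E]

lemma agb_lipschitz {F : E → ℝ} {L : ℝ} (hL : 0 < L)
    (hsmooth : ∀ x y : E, ‖gradient F x - gradient F y‖ ≤ L * ‖x - y‖) :
    LipschitzWith (Real.toNNReal L) (gradient F) := by
  refine LipschitzWith.of_dist_le_mul fun x y => ?_
  rw [dist_eq_norm, dist_eq_norm, Real.coe_toNNReal _ hL.le]
  exact hsmooth x y

lemma agb_memℒp_grad {F : E → ℝ} {L : ℝ} (hL : 0 < L)
    (hsmooth : ∀ x y : E, ‖gradient F x - gradient F y‖ ≤ L * ‖x - y‖)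
    {u : Ω → E} (hu_meas : AEStronglyMeasurable u μ) (hu : MemLp u 2 μ)
    [IsProbabilityMeasure μ] :
    MemLp (fun ω => gradient F (u ω)) 2 μ := by
  have hcont : Continuous (gradient F) := (agb_lipschitz hL hsmooth).continuous
  have hmeas : AEStronglyMeasurable (fun ω => gradient F (u ω)) μ :=
    hcont.comp_aestronglyMeasurable hu_meas
  have h1 : MemLp (fun ω => gradient F (u ω) - gradient F 0) 2 μ := by
    refine MemLp.of_le_mul (c := L) hu (hmeas.sub aestronglyMeasurable_const)
      (Filter.Eventually.of_forall fun ω => ?_)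
    simpa using hsmooth (u ω) 0
  have h2 := h1.add (memLp_const (gradient F 0))
  have heq : (fun ω => (gradient F (u ω) - gradient F 0) + gradient F 0)
      = fun ω => gradient F (u ω) := by
    funext ω; abel
  rwa [← heq]

end Helpers2

lemma agb_inner_integral_zero {Ω : Type*} {m mΩ : MeasurableSpace Ω} (hm : m ≤ mΩ)
    {μ : Measure Ω} [IsProbabilityMeasure μ]
    {E : Type*} [NormedAddCommGroup E] [InnerProductSpace ℝ E] [FiniteDimensional ℝ E]
    {X Y : Ω → E} (hX : AEStronglyMeasurable[m] X μ) (hXm : MemLp X 2 μ) (hYm : MemLp Y 2 μ)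
    (hY : μ[Y | m] =ᵐ[μ] 0) :
    ∫ ω, ⟪X ω, Y ω⟫ ∂μ = 0 := by
  set Xp := hXm.toLp X with hXp
  set Yp := hYm.toLp Y with hYp
  have h1 : ∫ ω, ⟪X ω, Y ω⟫ ∂μ = ⟪Xp, Yp⟫ := by
    rw [L2.inner_def]
    refine integral_congr_ae ?_
    filter_upwards [hXm.coeFn_toLp, hYm.coeFn_toLp] with ω hx hy
    rw [hx, hy]
  -- condExpL2 of Yp is a.e. zero
  have hzero : (condExpL2 E ℝ hm Yp : Lp E 2 μ) =ᵐ[μ] (0 : Ω → E) := by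
    refine lpMeas.ae_eq_zero_of_forall_setIntegral_eq_zero hm (condExpL2 E ℝ hm Yp)
      two_ne_zero ENNReal.ofNat_ne_top (fun s hs hμs => ?_) (fun s hs hμs => ?_)
    · exact (integrable_condExpL2_of_isFiniteMeasure hm).integrableOn
    · rw [integral_condExpL2_eq hm Yp hs hμs.ne]
      have hYint : Integrable Y μ := hYm.integrable one_le_two
      have e1 : ∫ x in s, Yp x ∂μ = ∫ x in s, Y x ∂μ :=
        setIntegral_congr_ae (hm s hs) (hYm.coeFn_toLp.mono fun x hx _ => hx)
      have e2 : ∫ x in s, Y x ∂μ = ∫ x in s, (μ[Y | m]) x ∂μ :=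
        (setIntegral_condExp hm hYint hs).symm
      have e3 : ∫ x in s, (μ[Y | m]) x ∂μ = 0 := by
        rw [setIntegral_congr_ae (hm s hs) (hY.mono fun x hx _ => hx)]
        simp
      rw [e1, e2, e3]
  have hX' : AEStronglyMeasurable[m] (Xp : Ω → E) μ :=
    hX.congr hXm.coeFn_toLp.symm
  have h2 : ⟪Yp, Xp⟫ = ⟪(condExpL2 E ℝ hm Yp : Lp E 2 μ), Xp⟫ :=
    (inner_condExpL2_eq_inner_fun hm Yp Xp hX').symm
  have h3 : ⟪(condExpL2 E ℝ hm Yp : Lp E 2 μ), Xp⟫ = 0 := by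
    rw [L2.inner_def]
    have : ∀ᵐ ω ∂μ, ⟪(condExpL2 E ℝ hm Yp : Lp E 2 μ) ω, Xp ω⟫ = 0 := by
      filter_upwards [hzero] with ω hω
      rw [hω]; simp
    rw [integral_congr_ae this, integral_zero]
  rw [h1, real_inner_comm, h2, h3]


lemma agb_norm_sum_sq_le {H : Type*} [NormedAddCommGroup H] [InnerProductSpace ℝ H]
    (n : ℕ) (v : ℕ → H) (horth : ∀ s t, s < t → ⟪v s, v t⟫ = 0)
    {χ : ℝ} (hv : ∀ s, ‖v s‖ ^ 2 ≤ χ ^ 2) :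
    ‖∑ s ∈ Finset.range n, v s‖ ^ 2 ≤ n * χ ^ 2 := by
  have key : ‖∑ s ∈ Finset.range n, v s‖ ^ 2
      = ∑ s ∈ Finset.range n, ‖v s‖ ^ 2 := by
    rw [← real_inner_self_eq_norm_sq, sum_inner]
    refine Finset.sum_congr rfl fun s hs => ?_
    rw [inner_sum]
    rw [Finset.sum_eq_single_of_mem s hs]
    · exact real_inner_self_eq_norm_sq _
    · intro t _ hts
      rcases lt_or_gt_of_ne hts with h | h
      · rw [real_inner_comm]; exact horth t s h
      · exact horth s t h
  rw [key]
  calc ∑ s ∈ Finset.range n, ‖v s‖ ^ 2 ≤ ∑ _s ∈ Finset.range n, χ ^ 2 :=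
        Finset.sum_le_sum fun s _ => hv s
    _ = n * χ ^ 2 := by simp [mul_comm]

lemma agb_toLp_sum {Ω : Type*} {mΩ : MeasurableSpace Ω} {μ : Measure Ω}
    {E : Type*} [NormedAddCommGroup E] [InnerProductSpace ℝ E]
    {f : ℕ → Ω → E} (h : ∀ t, MemLp (f t) 2 μ) (n : ℕ)
    (hs : MemLp (fun ω => ∑ t ∈ Finset.range n, f t ω) 2 μ) :
    hs.toLp _ = ∑ t ∈ Finset.range n, (h t).toLp (f t) := by
  induction n with
  | zero =>
    simp only [Finset.range_zero, Finset.sum_empty]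
    exact MemLp.toLp_zero _
  | succ n ih =>
    have hsum : MemLp (fun ω => ∑ t ∈ Finset.range n, f t ω) 2 μ := by
      have h' := memLp_finset_sum' (Finset.range n) (fun t (_ : t ∈ Finset.range n) => h t)
      rwa [show (∑ i ∈ Finset.range n, f i) = (fun ω => ∑ i ∈ Finset.range n, f i ω)
        from funext fun ω => Finset.sum_apply ω (Finset.range n) f] at h'
    have e1 : hs.toLp _ = (hsum.add (h n)).toLp
        ((fun ω => ∑ t ∈ Finset.range n, f t ω) + f n) := by
      refine MemLp.toLp_congr _ _ (Filter.EventuallyEq.of_eq ?_)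
      funext ω
      simp [Finset.sum_range_succ]
    rw [e1, MemLp.toLp_add hsum (h n), ih hsum, Finset.sum_range_succ]

lemma agb_gronwall (T : ℕ) (K c : ℝ) (hK : 0 ≤ K) (hc : 0 ≤ c) (a : ℕ → ℝ)
    (h : ∀ t, t ≤ T → a t ≤ K + c * ∑ s ∈ Finset.range t, a s) :
    ∀ t, t ≤ T → a t ≤ K * (1 + c) ^ t := by
  intro t
  induction t using Nat.strong_induction_on with
  | _ t ih =>
    intro ht
    have hsum : ∑ s ∈ Finset.range t, a s ≤ ∑ s ∈ Finset.range t, K * (1 + c) ^ s := by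
      refine Finset.sum_le_sum fun s hsmem => ?_
      exact ih s (Finset.mem_range.mp hsmem) (le_trans (Finset.mem_range.mp hsmem).le ht)
    have hgeom : c * ∑ s ∈ Finset.range t, (1 + c) ^ s = (1 + c) ^ t - 1 := by
      have := geom_sum_mul (1 + c) t
      have h2 : (1 + c - 1) = c := by ring
      rw [h2] at this
      linarith [this]
    have hKS : ∑ s ∈ Finset.range t, K * (1 + c) ^ s
        = K * ∑ s ∈ Finset.range t, (1 + c) ^ s := (Finset.mul_sum _ _ _).symm
    calc a t ≤ K + c * ∑ s ∈ Finset.range t, a s := h t ht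
      _ ≤ K + c * ∑ s ∈ Finset.range t, K * (1 + c) ^ s := by
          have := mul_le_mul_of_nonneg_left hsum hc
          linarith
      _ = K + c * (K * ∑ s ∈ Finset.range t, (1 + c) ^ s) := by rw [hKS]
      _ = K * (1 + c * ∑ s ∈ Finset.range t, (1 + c) ^ s) := by ring
      _ = K * (1 + c) ^ t := by rw [hgeom]; ring
  
lemma agb_pow_bound (T : ℕ) (c : ℝ) (hc : 0 ≤ c) (hTc : (T : ℝ) * c ≤ 1 / 24) (hT : 1 ≤ T) :
    (1 + c) ^ T ≤ 24 / 23 := by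
  have hc1 : c ≤ 1 / 24 := by
    calc c = 1 * c := (one_mul c).symm
      _ ≤ (T : ℝ) * c := by
        apply mul_le_mul_of_nonneg_right _ hc
        exact_mod_cast hT
      _ ≤ 1 / 24 := hTc
  have hbern : 1 - (T : ℝ) * c ≤ (1 - c) ^ T := by
    have := one_add_mul_le_pow (a := -c) (by linarith) T
    calc (1 : ℝ) - T * c = 1 + T * (-c) := by ring
      _ ≤ (1 + -c) ^ T := this
      _ = (1 - c) ^ T := by ring_nf
  have hprod : (1 + c) ^ T * (1 - c) ^ T = (1 - c ^ 2) ^ T := by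
    rw [← mul_pow]; ring_nf
  have hle1 : (1 - c ^ 2) ^ T ≤ 1 := by
    apply pow_le_one₀ <;> nlinarith
  have hA : (0 : ℝ) ≤ (1 + c) ^ T := by positivity
  have h1 : (1 + c) ^ T * (1 - (T : ℝ) * c) ≤ 1 := by
    calc (1 + c) ^ T * (1 - (T : ℝ) * c) ≤ (1 + c) ^ T * (1 - c) ^ T :=
          mul_le_mul_of_nonneg_left hbern hA
      _ = (1 - c ^ 2) ^ T := hprod
      _ ≤ 1 := hle1
  nlinarith [h1, hA]

set_option maxHeartbeats 1000000 in
lemma agb_single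
    {E : Type*} [NormedAddCommGroup E] [InnerProductSpace ℝ E] [FiniteDimensional ℝ E]
    {Ω : Type*} {mΩ : MeasurableSpace Ω} {μ : Measure Ω} [IsProbabilityMeasure μ]
    (ℱ : Filtration ℕ mΩ)
    (F : E → ℝ) (L : ℝ) (hL : 0 < L)
    (hsmooth : ∀ x y : E, ‖gradient F x - gradient F y‖ ≤ L * ‖x - y‖)
    (T : ℕ) (hT : 1 ≤ T) (η : ℝ) (hη : 0 < η) (χ : ℝ) (hχ : 0 ≤ χ)
    (w g : ℕ → Ω → E)
    (hupd : ∀ t, w (t + 1) = fun ω => w t ω - η • g t ω)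
    (hw_meas : ∀ t, StronglyMeasurable[ℱ t] (w t))
    (hg_meas : ∀ t, StronglyMeasurable[ℱ (t + 1)] (g t))
    (hw_L2 : ∀ t, MemLp (w t) 2 μ)
    (hg_L2 : ∀ t, MemLp (g t) 2 μ)
    (h_unbiased : ∀ t, μ[g t | ℱ t] =ᵐ[μ] fun ω => gradient F (w t ω))
    (h_var : ∀ t, ∫ ω, ‖g t ω - gradient F (w t ω)‖ ^ 2 ∂μ ≤ χ ^ 2)
    (hη_small : η ≤ 1 / (24 * T * L)) :
    ∫ ω, ‖∑ t ∈ Finset.range T, gradient F (w t ω)‖ ^ 2 ∂μ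
      ≤ 3 * T ^ 2 * ∫ ω, ‖gradient F (w 0 ω)‖ ^ 2 ∂μ
        + 8 * T ^ 3 * η ^ 2 * χ ^ 2 * L ^ 2 := by
  classical
  have hG_meas : ∀ t, StronglyMeasurable[ℱ t] (fun ω => gradient F (w t ω)) :=
    fun t => (agb_lipschitz hL hsmooth).continuous.comp_stronglyMeasurable (hw_meas t)
  have hG_L2 : ∀ t, MemLp (fun ω => gradient F (w t ω)) 2 μ := fun t =>
    agb_memℒp_grad hL hsmooth ((hw_meas t).mono (ℱ.le t)).aestronglyMeasurable (hw_L2 t)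
  have hξ_L2 : ∀ t, MemLp (g t - fun ω => gradient F (w t ω)) 2 μ :=
    fun t => (hg_L2 t).sub (hG_L2 t)
  set Gp : ℕ → Lp E 2 μ := fun t => (hG_L2 t).toLp _ with hGpdef
  set gp : ℕ → Lp E 2 μ := fun t => (hg_L2 t).toLp _ with hgpdef
  set Wp : ℕ → Lp E 2 μ := fun t => (hw_L2 t).toLp _ with hWpdef
  set ξ : ℕ → Lp E 2 μ := fun t => (hξ_L2 t).toLp _ with hξdef
  have hξeq : ∀ t, ξ t = gp t - Gp t := fun t => MemLp.toLp_sub _ _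
  -- variance bound on ξ
  have hvarξ : ∀ t, ‖ξ t‖ ^ 2 ≤ χ ^ 2 := by
    intro t
    have h1 : ‖ξ t‖ ^ 2 = ∫ ω, ‖g t ω - gradient F (w t ω)‖ ^ 2 ∂μ :=
      agb_sq_norm_toLp _ (hξ_L2 t)
    rw [h1]; exact h_var t
  -- orthogonality
  have horth : ∀ s t, s < t → ⟪ξ s, ξ t⟫ = 0 := by
    intro s t hst
    have hXmeas : StronglyMeasurable[ℱ t] (g s - fun ω => gradient F (w s ω)) :=
      ((hg_meas s).mono (ℱ.mono hst)).sub ((hG_meas s).mono (ℱ.mono hst.le))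
    have hcond : μ[(g t - fun ω => gradient F (w t ω)) | ℱ t] =ᵐ[μ] 0 := by
      have h1 := condExp_sub (μ := μ) (m := ℱ t)
        ((hg_L2 t).integrable one_le_two) ((hG_L2 t).integrable one_le_two)
      have h2 : μ[(fun ω => gradient F (w t ω)) | ℱ t]
          =ᵐ[μ] (fun ω => gradient F (w t ω)) :=
        Filter.EventuallyEq.of_eq
          (condExp_of_stronglyMeasurable (ℱ.le t) (hG_meas t) ((hG_L2 t).integrable one_le_two))
      filter_upwards [h1, h2, h_unbiased t] with ω e1 e2 e3
      rw [e1, Pi.sub_apply, e2, e3]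
      simp
    have h0 := agb_inner_integral_zero (ℱ.le t) hXmeas.aestronglyMeasurable
      (hξ_L2 s) (hξ_L2 t) hcond
    rw [L2.inner_def, ← h0]
    refine integral_congr_ae ?_
    filter_upwards [MemLp.coeFn_toLp (hξ_L2 s), MemLp.coeFn_toLp (hξ_L2 t)] with ω e1 e2
    rw [show ξ s = (hξ_L2 s).toLp _ from rfl, show ξ t = (hξ_L2 t).toLp _ from rfl]
    rw [e1, e2]
  -- update rule in Lp
  have hstep : ∀ t, Wp (t + 1) = Wp t - η • gp t := by
    intro t
    have h1 : Wp (t + 1) = ((hw_L2 t).sub ((hg_L2 t).const_smul η)).toLp (w t - η • g t) :=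
      MemLp.toLp_congr _ _ (Filter.EventuallyEq.of_eq (hupd t))
    rw [h1, MemLp.toLp_sub (hw_L2 t) ((hg_L2 t).const_smul η), MemLp.toLp_const_smul]
  have htel : ∀ t, Wp t = Wp 0 - η • ∑ s ∈ Finset.range t, gp s := by
    intro t
    induction t with
    | zero => simp
    | succ n ih => rw [hstep n, ih, Finset.sum_range_succ, smul_add, sub_sub]
  -- Lipschitz bound in Lp
  have hGdiff : ∀ t, ‖Gp t - Gp 0‖ ≤ L * ‖Wp t - Wp 0‖ := by
    intro t
    have e1 : Gp t - Gp 0 = ((hG_L2 t).sub (hG_L2 0)).toLp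
        (fun ω => gradient F (w t ω) - gradient F (w 0 ω)) := (MemLp.toLp_sub _ _).symm
    have e2 : Wp t - Wp 0 = ((hw_L2 t).sub (hw_L2 0)).toLp (fun ω => w t ω - w 0 ω) :=
      (MemLp.toLp_sub _ _).symm
    rw [e1, e2]
    exact agb_norm_toLp_le_mul _ _ hL.le fun ω => hsmooth (w t ω) (w 0 ω)
  -- noise sum bound
  have hξsum : ∀ t, t ≤ T → ‖∑ s ∈ Finset.range t, ξ s‖ ≤ Real.sqrt T * χ := by
    intro t ht
    have h1 : ‖∑ s ∈ Finset.range t, ξ s‖ ^ 2 ≤ t * χ ^ 2 :=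
      agb_norm_sum_sq_le t ξ horth hvarξ
    have h2 : (t : ℝ) * χ ^ 2 ≤ (Real.sqrt T * χ) ^ 2 := by
      rw [mul_pow, Real.sq_sqrt (by positivity : (0:ℝ) ≤ (T : ℝ))]
      have : (t : ℝ) ≤ (T : ℝ) := by exact_mod_cast ht
      nlinarith [sq_nonneg χ]
    exact (pow_le_pow_iff_left₀ (norm_nonneg _) (by positivity) two_ne_zero).mp (h1.trans h2)
  -- recursion
  set c : ℝ := L * η with hcdef
  have hc0 : 0 ≤ c := by positivity
  set K : ℝ := ‖Gp 0‖ + c * (Real.sqrt T * χ) with hKdef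
  have hK0 : 0 ≤ K := by positivity
  have hrec : ∀ t, t ≤ T → ‖Gp t‖ ≤ K + c * ∑ s ∈ Finset.range t, ‖Gp s‖ := by
    intro t ht
    have h1 : ‖Gp t‖ ≤ ‖Gp 0‖ + ‖Gp t - Gp 0‖ := by
      calc ‖Gp t‖ = ‖Gp 0 + (Gp t - Gp 0)‖ := by rw [add_sub_cancel]
        _ ≤ ‖Gp 0‖ + ‖Gp t - Gp 0‖ := norm_add_le _ _
    have h2 : ‖Wp t - Wp 0‖ = η * ‖∑ s ∈ Finset.range t, gp s‖ := by
      rw [htel t, sub_sub_cancel_left, norm_neg, norm_smul, Real.norm_eq_abs, abs_of_pos hη]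
    have h3 : ∑ s ∈ Finset.range t, gp s
        = ∑ s ∈ Finset.range t, Gp s + ∑ s ∈ Finset.range t, ξ s := by
      rw [← Finset.sum_add_distrib]
      refine Finset.sum_congr rfl fun s _ => ?_
      rw [hξeq s]; abel
    have h4 : ‖∑ s ∈ Finset.range t, gp s‖
        ≤ ∑ s ∈ Finset.range t, ‖Gp s‖ + Real.sqrt T * χ := by
      rw [h3]
      calc ‖∑ s ∈ Finset.range t, Gp s + ∑ s ∈ Finset.range t, ξ s‖
          ≤ ‖∑ s ∈ Finset.range t, Gp s‖ + ‖∑ s ∈ Finset.range t, ξ s‖ := norm_add_le _ _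
        _ ≤ ∑ s ∈ Finset.range t, ‖Gp s‖ + Real.sqrt T * χ :=
          add_le_add (norm_sum_le _ _) (hξsum t ht)
    calc ‖Gp t‖ ≤ ‖Gp 0‖ + ‖Gp t - Gp 0‖ := h1
      _ ≤ ‖Gp 0‖ + L * ‖Wp t - Wp 0‖ := by linarith [hGdiff t]
      _ = ‖Gp 0‖ + c * ‖∑ s ∈ Finset.range t, gp s‖ := by rw [h2, hcdef]; ring
      _ ≤ ‖Gp 0‖ + c * (∑ s ∈ Finset.range t, ‖Gp s‖ + Real.sqrt T * χ) := by
          have := mul_le_mul_of_nonneg_left h4 hc0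
          linarith
      _ = K + c * ∑ s ∈ Finset.range t, ‖Gp s‖ := by rw [hKdef]; ring
  have hgron := agb_gronwall T K c hK0 hc0 (fun t => ‖Gp t‖) hrec
  -- numeric facts
  have hTc : (T : ℝ) * c ≤ 1 / 24 := by
    have h24 : (0 : ℝ) < 24 * T * L := by positivity
    rw [le_div_iff₀ h24] at hη_small
    rw [hcdef]
    nlinarith [hη_small]
  have hpow := agb_pow_bound T c hc0 hTc hT
  -- sum bound
  have hsum : ‖∑ t ∈ Finset.range T, Gp t‖ ≤ (T : ℝ) * ((24 / 23) * K) := by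
    calc ‖∑ t ∈ Finset.range T, Gp t‖ ≤ ∑ t ∈ Finset.range T, ‖Gp t‖ := norm_sum_le _ _
      _ ≤ ∑ _t ∈ Finset.range T, K * (1 + c) ^ T := by
          refine Finset.sum_le_sum fun t ht => ?_
          refine (hgron t (Finset.mem_range.mp ht).le).trans ?_
          have hp : (1 + c) ^ t ≤ (1 + c) ^ T :=
            pow_le_pow_right₀ (by linarith) (Finset.mem_range.mp ht).le
          exact mul_le_mul_of_nonneg_left hp hK0
      _ = (T : ℝ) * (K * (1 + c) ^ T) := by
          rw [Finset.sum_const, Finset.card_range, nsmul_eq_mul]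
      _ ≤ (T : ℝ) * ((24 / 23) * K) := by
          have h5 : K * (1 + c) ^ T ≤ (24 / 23) * K := by
            have := mul_le_mul_of_nonneg_left hpow hK0
            linarith
          have hT0 : (0 : ℝ) ≤ (T : ℝ) := by positivity
          exact mul_le_mul_of_nonneg_left h5 hT0
  -- identify LHS and RHS integrals
  have hmem : MemLp (fun ω => ∑ t ∈ Finset.range T, gradient F (w t ω)) 2 μ := by
    have h' := memLp_finset_sum' (μ := μ) (Finset.range T)
      (fun t (_ : t ∈ Finset.range T) => hG_L2 t)
    rwa [show (∑ i ∈ Finset.range T, fun ω => gradient F (w i ω))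
        = (fun ω => ∑ i ∈ Finset.range T, gradient F (w i ω))
      from funext fun ω => Finset.sum_apply ω (Finset.range T) _] at h'
  have hLHS : ∫ ω, ‖∑ t ∈ Finset.range T, gradient F (w t ω)‖ ^ 2 ∂μ
      = ‖∑ t ∈ Finset.range T, Gp t‖ ^ 2 := by
    rw [← agb_sq_norm_toLp _ hmem, agb_toLp_sum hG_L2 T hmem]
  have hRHS : ∫ ω, ‖gradient F (w 0 ω)‖ ^ 2 ∂μ = ‖Gp 0‖ ^ 2 :=
    (agb_sq_norm_toLp _ (hG_L2 0)).symm
  rw [hLHS, hRHS]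
  -- final numeric computation
  set A : ℝ := ‖Gp 0‖ with hA
  have hA0 : 0 ≤ A := norm_nonneg _
  have hS2 : ‖∑ t ∈ Finset.range T, Gp t‖ ^ 2 ≤ ((T : ℝ) * ((24 / 23) * K)) ^ 2 :=
    pow_le_pow_left₀ (norm_nonneg _) hsum 2
  have hsqT : (Real.sqrt T) ^ 2 = (T : ℝ) := Real.sq_sqrt (by positivity)
  have hK2 : K ^ 2 ≤ 2 * A ^ 2 + 2 * c ^ 2 * (T : ℝ) * χ ^ 2 := by
    have hKexp : K = A + c * (Real.sqrt T * χ) := hKdef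
    have hB : (c * (Real.sqrt T * χ)) ^ 2 = c ^ 2 * (T : ℝ) * χ ^ 2 := by
      calc (c * (Real.sqrt T * χ)) ^ 2 = c ^ 2 * ((Real.sqrt T) ^ 2 * χ ^ 2) := by ring
        _ = c ^ 2 * ((T : ℝ) * χ ^ 2) := by rw [hsqT]
        _ = c ^ 2 * (T : ℝ) * χ ^ 2 := by ring
    rw [hKexp]
    nlinarith [sq_nonneg (A - c * (Real.sqrt T * χ)), hB]
  have ht1 : (1 : ℝ) ≤ (T : ℝ) := by exact_mod_cast hT
  have hc2 : c ^ 2 = L ^ 2 * η ^ 2 := by rw [hcdef]; ring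
  have hfact1 : (0 : ℝ) ≤ (T : ℝ) ^ 2 * A ^ 2 := by positivity
  have hfact2 : (0 : ℝ) ≤ (T : ℝ) ^ 3 * (c ^ 2 * χ ^ 2) := by positivity
  have hmain : ((T : ℝ) * ((24 / 23) * K)) ^ 2 = (576 / 529) * ((T : ℝ) ^ 2 * K ^ 2) := by ring
  have h6 : ((T : ℝ) * ((24 / 23) * K)) ^ 2
      ≤ (576 / 529) * ((T : ℝ) ^ 2 * (2 * A ^ 2 + 2 * c ^ 2 * (T : ℝ) * χ ^ 2)) := by
    rw [hmain]
    exact mul_le_mul_of_nonneg_left (mul_le_mul_of_nonneg_left hK2 (by positivity))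
      (by norm_num)
  have h7 : (576 / 529 : ℝ) * ((T : ℝ) ^ 2 * (2 * A ^ 2 + 2 * c ^ 2 * (T : ℝ) * χ ^ 2))
      ≤ 3 * (T : ℝ) ^ 2 * A ^ 2 + 8 * (T : ℝ) ^ 3 * η ^ 2 * χ ^ 2 * L ^ 2 := by
    have e : (576 / 529 : ℝ) * ((T : ℝ) ^ 2 * (2 * A ^ 2 + 2 * c ^ 2 * (T : ℝ) * χ ^ 2))
        = (1152 / 529) * ((T : ℝ) ^ 2 * A ^ 2) + (1152 / 529) * ((T : ℝ) ^ 3 * (c ^ 2 * χ ^ 2)) := by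
      ring
    have e2 : 8 * (T : ℝ) ^ 3 * η ^ 2 * χ ^ 2 * L ^ 2
        = 8 * ((T : ℝ) ^ 3 * (c ^ 2 * χ ^ 2)) := by rw [hc2]; ring
    rw [e, e2]
    have e3 : 3 * (T : ℝ) ^ 2 * A ^ 2 = 3 * ((T : ℝ) ^ 2 * A ^ 2) := by ring
    rw [e3]
    linarith
  -- cast alignment not needed
  linarith [hS2, h6, h7]


/-- **Lemma (accumulated gradient bound).** For `N` parallel stochastic-gradient
trajectories with `η ≤ 1/(24TL)`,
`Σᵢ E[‖Σ_t ∇fᵢ(w_{i,t})‖²] ≤ 3T²·Σᵢ E[‖∇fᵢ(wᵢ)‖²] + 8T³η²χ²L²N`. -/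
theorem accumulated_gradient_bound
    {E : Type*} [NormedAddCommGroup E] [InnerProductSpace ℝ E] [FiniteDimensional ℝ E]
    {Ω : Type*} {mΩ : MeasurableSpace Ω} {μ : Measure Ω} [IsProbabilityMeasure μ]
    (ℱ : Filtration ℕ mΩ)
    {N : ℕ} (hN : 0 < N)
    (f : Fin N → E → ℝ) (L : ℝ) (hL : 0 < L)
    (hdiff : ∀ i, Differentiable ℝ (f i))
    (hsmooth : ∀ i, ∀ x y : E, ‖gradient (f i) x - gradient (f i) y‖ ≤ L * ‖x - y‖)
    (T : ℕ) (hT : 1 ≤ T) (η : ℝ) (hη : 0 < η) (χ : ℝ) (hχ : 0 ≤ χ)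
    (w g : Fin N → ℕ → Ω → E)
    (hupd : ∀ i t, w i (t + 1) = fun ω => w i t ω - η • g i t ω)
    (hw_meas : ∀ i t, StronglyMeasurable[ℱ t] (w i t))
    (hg_meas : ∀ i t, StronglyMeasurable[ℱ (t + 1)] (g i t))
    (hw_L2 : ∀ i t, MemLp (w i t) 2 μ)
    (hg_L2 : ∀ i t, MemLp (g i t) 2 μ)
    (h_unbiased : ∀ i t, μ[g i t | ℱ t] =ᵐ[μ] fun ω => gradient (f i) (w i t ω))
    (h_var : ∀ i t, ∫ ω, ‖g i t ω - gradient (f i) (w i t ω)‖ ^ 2 ∂μ ≤ χ ^ 2)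
    (hη_small : η ≤ 1 / (24 * T * L)) :
    ∑ i, ∫ ω, ‖∑ t ∈ Finset.range T, gradient (f i) (w i t ω)‖ ^ 2 ∂μ
      ≤ 3 * T ^ 2 * ∑ i, ∫ ω, ‖gradient (f i) (w i 0 ω)‖ ^ 2 ∂μ
        + 8 * T ^ 3 * η ^ 2 * χ ^ 2 * L ^ 2 * N := by
  have hper : ∀ i, ∫ ω, ‖∑ t ∈ Finset.range T, gradient (f i) (w i t ω)‖ ^ 2 ∂μ
      ≤ 3 * T ^ 2 * ∫ ω, ‖gradient (f i) (w i 0 ω)‖ ^ 2 ∂μ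
        + 8 * T ^ 3 * η ^ 2 * χ ^ 2 * L ^ 2 :=
    fun i => agb_single ℱ (f i) L hL (hsmooth i) T hT η hη χ hχ (w i) (g i)
      (hupd i) (hw_meas i) (hg_meas i) (hw_L2 i) (hg_L2 i) (h_unbiased i) (h_var i) hη_small
  calc ∑ i, ∫ ω, ‖∑ t ∈ Finset.range T, gradient (f i) (w i t ω)‖ ^ 2 ∂μ
      ≤ ∑ i : Fin N, (3 * T ^ 2 * ∫ ω, ‖gradient (f i) (w i 0 ω)‖ ^ 2 ∂μ
        + 8 * T ^ 3 * η ^ 2 * χ ^ 2 * L ^ 2) :=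
        Finset.sum_le_sum fun i _ => hper i
    _ = 3 * T ^ 2 * ∑ i, ∫ ω, ‖gradient (f i) (w i 0 ω)‖ ^ 2 ∂μ
        + 8 * T ^ 3 * η ^ 2 * χ ^ 2 * L ^ 2 * N := by
        rw [Finset.sum_add_distrib, ← Finset.mul_sum, Finset.sum_const, Finset.card_univ,
          Fintype.card_fin, nsmul_eq_mul]
        ring
end
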